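/- arXiv:1403.4962 — 7 statements merged into one kernel-verified Lean document; each statement's English description precedes it below -/
import Mathlib

section
/- For all nonnegative integers n, i, k: C(n,i)·C(n+i,i)·C(n,k)·C(n+k,k) = Σ_{j=0}^{i+k} C(i+k,i)·M(j;i,k)·C(n,j)·C(n+j,j), where C denotes the usual binomial coefficient. -/
def M (j i k : ℕ) : ℕ :=
  if i ≤ j ∧ k ≤ j ∧ j ≤ i + k then
    Nat.factorial j /
      (Nat.factorial (j - i) * Nat.factorial (j - k) * Nat.factorial (i + k - j))
  else 0

open Nat Finset

private lemma fne (m : ℕ) : ((m ! : ℕ) : ℚ) ≠ 0 := by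
  exact_mod_cast Nat.factorial_ne_zero m

private lemma M_mul {j i k : ℕ} (h1 : i ≤ j) (h2 : k ≤ j) (h3 : j ≤ i + k) :
    M j i k * ((j - i)! * (j - k)! * (i + k - j)!) = j ! := by
  unfold M
  rw [if_pos ⟨h1, h2, h3⟩]
  apply Nat.div_mul_cancel
  have hd1 : (j - k)! * (i + k - j)! ∣ i ! := by
    have := Nat.factorial_mul_factorial_dvd_factorial_add (j - k) (i + k - j)
    rwa [show (j - k) + (i + k - j) = i by omega] at this
  calc (j - i)! * (j - k)! * (i + k - j)! = (j - i)! * ((j - k)! * (i + k - j)!) := by ring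
    _ ∣ (j - i)! * i ! := mul_dvd_mul_left _ hd1
    _ ∣ j ! := by
        have := Nat.factorial_mul_factorial_dvd_factorial_add (j - i) i
        rwa [show (j - i) + i = j by omega] at this

private lemma M_cast {j i k : ℕ} (h1 : i ≤ j) (h2 : k ≤ j) (h3 : j ≤ i + k) :
    (M j i k : ℚ) = (j ! : ℚ) / (((j - i)! : ℚ) * ((j - k)! : ℚ) * ((i + k - j)! : ℚ)) := by
  rw [eq_div_iff (by exact mul_ne_zero (mul_ne_zero (fne _) (fne _)) (fne _))]
  exact_mod_cast congrArg (Nat.cast (R := ℚ)) (M_mul h1 h2 h3)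

private def A (n j : ℕ) : ℚ := (n.choose j : ℚ) * ((n + j).choose j : ℚ)

private def b (i k j : ℕ) : ℚ := ((i + k).choose i : ℚ) * (M j i k : ℚ)

private lemma A_rec (n j : ℕ) :
    ((j : ℚ) + 1) ^ 2 * A n (j + 1) = ((n : ℚ) - j) * ((n : ℚ) + j + 1) * A n j := by
  have h2 : (((n + j + 1).choose (j + 1) : ℕ) : ℚ) * ((j : ℚ) + 1)
      = ((n : ℚ) + j + 1) * (((n + j).choose j : ℕ) : ℚ) := by
    have := Nat.add_one_mul_choose_eq (n + j) j
    have := congrArg (Nat.cast (R := ℚ)) this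
    push_cast at this
    linarith [this]
  have h1 : ((n.choose (j + 1) : ℕ) : ℚ) * ((j : ℚ) + 1)
      = ((n.choose j : ℕ) : ℚ) * ((n : ℚ) - j) := by
    rcases le_or_gt j n with h | h
    · have := congrArg (Nat.cast (R := ℚ)) (Nat.choose_succ_right_eq n j)
      push_cast [h] at this
      linarith [this]
    · rw [Nat.choose_eq_zero_of_lt h, Nat.choose_eq_zero_of_lt (by omega)]
      simp
  show ((j : ℚ) + 1) ^ 2 * ((n.choose (j + 1) : ℚ) * ((n + (j + 1)).choose (j + 1) : ℚ)) = _
  have he : n + (j + 1) = n + j + 1 := by omega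
  rw [he]
  unfold A
  linear_combination ((j : ℚ) + 1) * (((n + j + 1).choose (j + 1) : ℕ) : ℚ) * h1
    + (((n : ℚ) - j) * ((n.choose j : ℕ) : ℚ)) * h2

private lemma M_zero {j i k : ℕ} (h : ¬(i ≤ j ∧ k ≤ j ∧ j ≤ i + k)) : M j i k = 0 :=
  if_neg h

private lemma K0 (i k : ℕ) :
    ((k : ℚ) + 1) ^ 2 * b i (k + 1) 0 = ((0 : ℚ) ^ 2 + 0 - (k : ℚ) ^ 2 - k) * b i k 0 := by
  have h1 : M 0 i (k + 1) = 0 := M_zero (by omega)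
  rcases Nat.eq_zero_or_pos k with rfl | hk
  · simp [b, h1]
  · have h2 : M 0 i k = 0 := M_zero (by omega)
    simp [b, h1, h2]

private lemma choose_cast (i k : ℕ) :
    ((i + k).choose i : ℚ) = ((i + k)! : ℚ) / ((i ! : ℚ) * (k ! : ℚ)) := by
  rw [Nat.cast_choose ℚ (Nat.le_add_right i k)]
  congr 2
  rw [Nat.add_sub_cancel_left]

private lemma K1 (i k j : ℕ) :
    ((k : ℚ) + 1) ^ 2 * b i (k + 1) (j + 1)
      = ((j : ℚ) + 1) ^ 2 * b i k j
        + (((j : ℚ) + 1) ^ 2 + ((j : ℚ) + 1) - (k : ℚ) ^ 2 - k) * b i k (j + 1) := by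
  rcases lt_or_ge j k with hkj | hkj
  · -- k > j : all M with "k ≤ j"-type conditions vanish
    have hM1 : M (j + 1) i (k + 1) = 0 := M_zero (by omega)
    have hM2 : M j i k = 0 := M_zero (by omega)
    rcases eq_or_lt_of_le (show j + 1 ≤ k from hkj) with hk1 | hk1
    · -- k = j + 1 : coefficient of the remaining term vanishes
      simp only [b, hM1, hM2, Nat.cast_zero, mul_zero, zero_mul, add_zero, zero_add]
      rw [← hk1]
      push_cast
      ring
    · have hM3 : M (j + 1) i k = 0 := M_zero (by omega)
      simp [b, hM1, hM2, hM3]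
  rcases lt_or_ge (i + k) j with hij | hij
  · -- j > i + k : everything vanishes
    have hM1 : M (j + 1) i (k + 1) = 0 := M_zero (by omega)
    have hM2 : M j i k = 0 := M_zero (by omega)
    have hM3 : M (j + 1) i k = 0 := M_zero (by omega)
    simp [b, hM1, hM2, hM3]
  rcases lt_or_ge (j + 1) i with hii | hii
  · -- i > j + 1 : everything vanishes
    have hM1 : M (j + 1) i (k + 1) = 0 := M_zero (by omega)
    have hM2 : M j i k = 0 := M_zero (by omega)
    have hM3 : M (j + 1) i k = 0 := M_zero (by omega)
    simp [b, hM1, hM2, hM3]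
  rcases eq_or_lt_of_le hii with hieq | hile
  · -- i = j + 1
    have hM2 : M j i k = 0 := M_zero (by omega)
    have hA : (M (j + 1) i (k + 1) : ℚ)
        = ((j + 1)! : ℚ) / ((0! : ℚ) * ((j - k)! : ℚ) * ((k + 1)! : ℚ)) := by
      have h := M_cast (j := j + 1) (i := i) (k := k + 1) (by omega) (by omega) (by omega)
      rw [show j + 1 - i = 0 by omega, show j + 1 - (k + 1) = j - k by omega,
        show i + (k + 1) - (j + 1) = k + 1 by omega] at h
      exact h
    have hC : (M (j + 1) i k : ℚ)
        = ((j + 1)! : ℚ) / ((0! : ℚ) * ((j - k + 1)! : ℚ) * (k ! : ℚ)) := by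
      have h := M_cast (j := j + 1) (i := i) (k := k) (by omega) (by omega) (by omega)
      rw [show j + 1 - i = 0 by omega, show j + 1 - k = j - k + 1 by omega,
        show i + k - (j + 1) = k by omega] at h
      exact h
    have hu : ((i + (k + 1)).choose i : ℚ) = (((i + k) + 1)! : ℚ) / ((i ! : ℚ) * ((k + 1)! : ℚ)) := by
      rw [show i + (k + 1) = (i + k) + 1 by omega]
      rw [Nat.cast_choose ℚ (by omega)]
      congr 2
      rw [show i + k + 1 - i = k + 1 by omega]
    have hv := choose_cast i k
    simp only [b, hA, hC, hM2, hu, hv, Nat.cast_zero, mul_zero, zero_mul, add_zero, zero_add]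
    have s1 : (((j - k + 1)! : ℕ) : ℚ) = ((j : ℚ) - k + 1) * (((j - k)! : ℕ) : ℚ) := by
      rw [Nat.factorial_succ]
      push_cast [hkj]
      ring
    have s2 : ((((i + k) + 1)! : ℕ) : ℚ) = ((i : ℚ) + k + 1) * (((i + k)! : ℕ) : ℚ) := by
      rw [Nat.factorial_succ]; push_cast; ring
    have s3 : (((k + 1)! : ℕ) : ℚ) = ((k : ℚ) + 1) * ((k ! : ℕ) : ℚ) := by
      rw [Nat.factorial_succ]; push_cast; ring
    rw [s1, s2, s3]
    have hik : (i : ℚ) = (j : ℚ) + 1 := by exact_mod_cast congrArg (Nat.cast (R := ℚ)) hieq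
    rw [hik]
    have hjk : ((j : ℚ) - k + 1) ≠ 0 := by
      have : (k : ℚ) ≤ j := by exact_mod_cast hkj
      linarith
    field_simp
    ring
  · -- i ≤ j
    rcases eq_or_lt_of_le hij with hjeq | hjlt
    · -- j = i + k
      subst hjeq
      have hM3 : M (i + k + 1) i k = 0 := M_zero (by omega)
      have hA : (M (i + k + 1) i (k + 1) : ℚ)
          = (((i + k) + 1)! : ℚ) / (((k + 1)! : ℚ) * (i ! : ℚ) * ((0!) : ℚ)) := by
        have h := M_cast (j := i + k + 1) (i := i) (k := k + 1) (by omega) (by omega) (by omega)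
        rw [show i + k + 1 - i = k + 1 by omega, show i + k + 1 - (k + 1) = i by omega,
          show i + (k + 1) - (i + k + 1) = 0 by omega] at h
        exact h
      have hB : (M (i + k) i k : ℚ)
          = ((i + k)! : ℚ) / ((k ! : ℚ) * (i ! : ℚ) * ((0!) : ℚ)) := by
        have h := M_cast (j := i + k) (i := i) (k := k) (by omega) (by omega) (by omega)
        rw [show i + k - i = k by omega, show i + k - k = i by omega,
          show i + k - (i + k) = 0 by omega] at h
        exact h
      have hu : ((i + (k + 1)).choose i : ℚ)
          = (((i + k) + 1)! : ℚ) / ((i ! : ℚ) * ((k + 1)! : ℚ)) := by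
        rw [show i + (k + 1) = (i + k) + 1 by omega, Nat.cast_choose ℚ (by omega)]
        congr 2
        rw [show i + k + 1 - i = k + 1 by omega]
      have hv := choose_cast i k
      simp only [b, hA, hB, hM3, hu, hv, Nat.cast_zero, mul_zero, zero_mul, add_zero,
        Nat.factorial_zero, Nat.cast_one, mul_one]
      have s2 : ((((i + k) + 1)! : ℕ) : ℚ) = ((i : ℚ) + k + 1) * (((i + k)! : ℕ) : ℚ) := by
        rw [Nat.factorial_succ]; push_cast; ring
      have s3 : (((k + 1)! : ℕ) : ℚ) = ((k : ℚ) + 1) * ((k ! : ℕ) : ℚ) := by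
        rw [Nat.factorial_succ]; push_cast; ring
      rw [s2, s3]
      push_cast
      field_simp
    · -- main case : i ≤ j, k ≤ j, j < i + k
      have hA : (M (j + 1) i (k + 1) : ℚ)
          = (((j + 1)!) : ℚ)
            / ((((j - i) + 1)! : ℚ) * ((j - k)! : ℚ) * (((i + k - j - 1) + 1)! : ℚ)) := by
        have h := M_cast (j := j + 1) (i := i) (k := k + 1) (by omega) (by omega) (by omega)
        rw [show j + 1 - i = (j - i) + 1 by omega, show j + 1 - (k + 1) = j - k by omega,
          show i + (k + 1) - (j + 1) = (i + k - j - 1) + 1 by omega] at h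
        exact h
      have hB : (M j i k : ℚ)
          = ((j !) : ℚ)
            / (((j - i)! : ℚ) * ((j - k)! : ℚ) * (((i + k - j - 1) + 1)! : ℚ)) := by
        have h := M_cast (j := j) (i := i) (k := k) (by omega) (by omega) (by omega)
        rw [show i + k - j = (i + k - j - 1) + 1 by omega] at h
        exact h
      have hC : (M (j + 1) i k : ℚ)
          = (((j + 1)!) : ℚ)
            / ((((j - i) + 1)! : ℚ) * (((j - k) + 1)! : ℚ) * ((i + k - j - 1)! : ℚ)) := by
        have h := M_cast (j := j + 1) (i := i) (k := k) (by omega) (by omega) (by omega)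
        rw [show j + 1 - i = (j - i) + 1 by omega, show j + 1 - k = (j - k) + 1 by omega,
          show i + k - (j + 1) = i + k - j - 1 by omega] at h
        exact h
      have hu : ((i + (k + 1)).choose i : ℚ)
          = (((i + k) + 1)! : ℚ) / ((i ! : ℚ) * ((k + 1)! : ℚ)) := by
        rw [show i + (k + 1) = (i + k) + 1 by omega, Nat.cast_choose ℚ (by omega)]
        congr 2
        rw [show i + k + 1 - i = k + 1 by omega]
      have hv := choose_cast i k
      have hi' : i ≤ j := by omega
      have sA : ((((j - i) + 1)! : ℕ) : ℚ) = ((j : ℚ) - i + 1) * (((j - i)! : ℕ) : ℚ) := by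
        rw [Nat.factorial_succ]; push_cast [hi']; ring
      have sB : ((((j - k) + 1)! : ℕ) : ℚ) = ((j : ℚ) - k + 1) * (((j - k)! : ℕ) : ℚ) := by
        rw [Nat.factorial_succ]; push_cast [hkj]; ring
      have hcst : ((i + k - j - 1 : ℕ) : ℚ) = (i : ℚ) + k - j - 1 := by
        rw [Nat.cast_sub (by omega : 1 ≤ i + k - j), Nat.cast_sub (by omega : j ≤ i + k)]
        push_cast; ring
      have sC : ((((i + k - j - 1) + 1)! : ℕ) : ℚ)
          = ((i : ℚ) + k - j) * (((i + k - j - 1)! : ℕ) : ℚ) := by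
        rw [Nat.factorial_succ, Nat.cast_mul, Nat.cast_add, Nat.cast_one, hcst]; ring
      have s2 : ((((i + k) + 1)! : ℕ) : ℚ) = ((i : ℚ) + k + 1) * (((i + k)! : ℕ) : ℚ) := by
        rw [Nat.factorial_succ]; push_cast; ring
      have s3 : (((k + 1)! : ℕ) : ℚ) = ((k : ℚ) + 1) * ((k ! : ℕ) : ℚ) := by
        rw [Nat.factorial_succ]; push_cast; ring
      have sJ : (((j + 1)! : ℕ) : ℚ) = ((j : ℚ) + 1) * ((j ! : ℕ) : ℚ) := by
        rw [Nat.factorial_succ]; push_cast; ring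
      simp only [b, hA, hB, hC, hu, hv, sA, sB, sC, s2, s3, sJ]
      have d1 : ((j : ℚ) - i + 1) ≠ 0 := by
        have : (i : ℚ) ≤ j := by exact_mod_cast hi'
        linarith
      have d2 : ((j : ℚ) - k + 1) ≠ 0 := by
        have : (k : ℚ) ≤ j := by exact_mod_cast hkj
        linarith
      have d3 : ((i : ℚ) + k - j) ≠ 0 := by
        have : (j : ℚ) + 1 ≤ (i : ℚ) + k := by exact_mod_cast hjlt
        linarith
      field_simp
      ring

private lemma key (n i : ℕ) :
    ∀ k, A n i * A n k = ∑ j ∈ Finset.range (i + k + 1), b i k j * A n j := by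
  intro k
  induction k with
  | zero =>
      have h0 : A n 0 = 1 := by simp [A]
      rw [Finset.sum_eq_single i]
      · have hb : b i 0 i = 1 := by
          have hM : M i i 0 = 1 := by
            unfold M
            rw [if_pos ⟨le_refl i, Nat.zero_le i, by omega⟩]
            simp [Nat.sub_self, Nat.factorial_zero, Nat.div_self (Nat.factorial_pos i)]
          simp [b, hM]
        rw [hb, h0]; ring
      · intro j _ hne
        have : M j i 0 = 0 := M_zero (by omega)
        simp [b, this]
      · intro h
        exact absurd (by simp : i ∈ Finset.range (i + 0 + 1)) h
  | succ k ih =>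
      refine mul_left_cancel₀ (show ((k : ℚ) + 1) ^ 2 ≠ 0 by positivity) ?_
      have main : ∑ j ∈ Finset.range (i + k + 1 + 1), ((k : ℚ) + 1) ^ 2 * (b i (k + 1) j * A n j)
          = ((k : ℚ) + 1) ^ 2 * (A n i * A n (k + 1)) := by
        rw [Finset.sum_range_succ']
        calc (∑ j ∈ Finset.range (i + k + 1), ((k : ℚ) + 1) ^ 2 * (b i (k + 1) (j + 1) * A n (j + 1)))
              + ((k : ℚ) + 1) ^ 2 * (b i (k + 1) 0 * A n 0)
            = (∑ j ∈ Finset.range (i + k + 1),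
                (((j : ℚ) + 1) ^ 2 * b i k j * A n (j + 1)
                  + ((((j + 1 : ℕ)) : ℚ) ^ 2 + (((j + 1 : ℕ)) : ℚ) - (k : ℚ) ^ 2 - k)
                      * (b i k (j + 1) * A n (j + 1))))
              + (((0 : ℕ) : ℚ) ^ 2 + ((0 : ℕ) : ℚ) - (k : ℚ) ^ 2 - k) * (b i k 0 * A n 0) := by
              congr 1
              · refine Finset.sum_congr rfl fun j _ => ?_
                push_cast
                linear_combination A n (j + 1) * K1 i k j
              · push_cast
                linear_combination A n 0 * K0 i k
          _ = (∑ j ∈ Finset.range (i + k + 1), ((j : ℚ) + 1) ^ 2 * b i k j * A n (j + 1))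
              + ∑ j ∈ Finset.range (i + k + 1 + 1),
                  (((j : ℕ) : ℚ) ^ 2 + ((j : ℕ) : ℚ) - (k : ℚ) ^ 2 - k) * (b i k j * A n j) := by
              rw [Finset.sum_add_distrib,
                Finset.sum_range_succ'
                  (fun j => (((j : ℕ) : ℚ) ^ 2 + ((j : ℕ) : ℚ) - (k : ℚ) ^ 2 - k) * (b i k j * A n j))
                  (i + k + 1)]
              ring
          _ = ∑ j ∈ Finset.range (i + k + 1),
                (((j : ℚ) + 1) ^ 2 * b i k j * A n (j + 1)
                  + (((j : ℚ)) ^ 2 + (j : ℚ) - (k : ℚ) ^ 2 - k) * (b i k j * A n j)) := by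
              rw [Finset.sum_range_succ
                (fun j => (((j : ℕ) : ℚ) ^ 2 + ((j : ℕ) : ℚ) - (k : ℚ) ^ 2 - k) * (b i k j * A n j))
                (i + k + 1)]
              have hb0 : b i k (i + k + 1) = 0 := by
                have : M (i + k + 1) i k = 0 := M_zero (by omega)
                simp [b, this]
              rw [hb0, Finset.sum_add_distrib]
              ring
          _ = ∑ j ∈ Finset.range (i + k + 1),
                ((n : ℚ) ^ 2 + (n : ℚ) - (k : ℚ) ^ 2 - k) * (b i k j * A n j) := by
              refine Finset.sum_congr rfl fun j _ => ?_
              linear_combination (b i k j) * A_rec n j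
          _ = ((n : ℚ) ^ 2 + (n : ℚ) - (k : ℚ) ^ 2 - k) * (A n i * A n k) := by
              rw [← Finset.mul_sum, ← ih]
          _ = ((k : ℚ) + 1) ^ 2 * (A n i * A n (k + 1)) := by
              linear_combination (-(A n i)) * A_rec n k
      rw [Finset.mul_sum]
      exact main.symm

/-- Result 2.1.1. -/
theorem stmt_1 (n i k : ℕ) :
    n.choose i * (n + i).choose i * n.choose k * (n + k).choose k =
      ∑ j ∈ Finset.range (i + k + 1),
        (i + k).choose i * M j i k * n.choose j * (n + j).choose j := by
  have h := key n i k
  simp only [A, b] at h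
  have h2 : ((n.choose i * (n + i).choose i * n.choose k * (n + k).choose k : ℕ) : ℚ)
      = ((∑ j ∈ Finset.range (i + k + 1),
          (i + k).choose i * M j i k * n.choose j * (n + j).choose j : ℕ) : ℚ) := by
    have h3 : (∑ j ∈ Finset.range (i + k + 1),
          ((i + k).choose i : ℚ) * (M j i k : ℚ) * ((n.choose j : ℚ) * ((n + j).choose j : ℚ)))
        = ∑ j ∈ Finset.range (i + k + 1),
          ((i + k).choose i : ℚ) * (M j i k : ℚ) * (n.choose j : ℚ) * ((n + j).choose j : ℚ) :=
      Finset.sum_congr rfl fun j _ => by ring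
    push_cast
    rw [← h3]
    linear_combination h
  exact_mod_cast h2
end

section
/- For all nonnegative integers n, i, k: C(n,i)·C(n,k) = Σ_{j=0}^{i+k} M(j;i,k)·C(n,j), where C denotes the usual binomial coefficient. -/
lemma M_eq (j i k : ℕ) (hi : i ≤ j) (hk : k ≤ j) (hjk : j ≤ i + k) :
    M j i k = j.choose i * i.choose (i + k - j) := by
  rw [M, if_pos ⟨hi, hk, hjk⟩]
  have h1 : i + k - j ≤ i := by omega
  have e1 := Nat.choose_mul_factorial_mul_factorial hi
  have e2 := Nat.choose_mul_factorial_mul_factorial h1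
  have h2 : i - (i + k - j) = j - k := by omega
  rw [h2] at e2
  apply Nat.div_eq_of_eq_mul_left
  · positivity
  · rw [← e1, ← e2]; ring

/-- Result 2.2. -/
theorem stmt_3 (n i k : ℕ) :
    n.choose i * n.choose k = ∑ j ∈ Finset.range (i + k + 1), M j i k * n.choose j := by
  by_cases hin : n < i
  · rw [Nat.choose_eq_zero_of_lt hin, Nat.zero_mul]
    symm
    apply Finset.sum_eq_zero
    intro j hj
    rcases le_or_gt i j with h | h
    · rw [Nat.choose_eq_zero_of_lt (by omega), Nat.mul_zero]
    · rw [M, if_neg (by omega), Nat.zero_mul]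
  by_cases hkn : n < k
  · rw [Nat.choose_eq_zero_of_lt hkn, Nat.mul_zero]
    symm
    apply Finset.sum_eq_zero
    intro j hj
    rcases le_or_gt k j with h | h
    · rw [Nat.choose_eq_zero_of_lt (by omega), Nat.mul_zero]
    · rw [M, if_neg (by omega), Nat.zero_mul]
  push_neg at hin hkn
  -- reindex RHS by m ↦ i + k - m
  rw [← Finset.sum_range_reflect (fun j => M j i k * n.choose j) (i + k + 1)]
  simp only [Nat.add_sub_cancel]
  -- Vandermonde on the LHS
  have hv : n.choose k = ∑ m ∈ Finset.range (k + 1), i.choose m * (n - i).choose (k - m) := by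
    conv_lhs => rw [show n = i + (n - i) by omega, Nat.add_choose_eq]
    rw [Finset.Nat.sum_antidiagonal_eq_sum_range_succ_mk]
  rw [hv, Finset.mul_sum]
  have step : (∑ m ∈ Finset.range (k + 1),
        (if m ≤ k then n.choose i * (i.choose m * (n - i).choose (k - m)) else 0))
      = ∑ m ∈ Finset.range (i + k + 1),
        (if m ≤ k then n.choose i * (i.choose m * (n - i).choose (k - m)) else 0) := by
    apply Finset.sum_subset (Finset.range_subset_range.mpr (by omega))
    intro x _ hx2
    simp only [Finset.mem_range, not_lt] at hx2
    rw [if_neg (by omega)]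
  rw [show (∑ m ∈ Finset.range (k + 1), n.choose i * (i.choose m * (n - i).choose (k - m)))
      = ∑ m ∈ Finset.range (k + 1),
        (if m ≤ k then n.choose i * (i.choose m * (n - i).choose (k - m)) else 0) from
    Finset.sum_congr rfl fun m hm => by
      rw [if_pos (by simp only [Finset.mem_range] at hm; omega)]]
  rw [step]
  apply Finset.sum_congr rfl
  intro m hm
  simp only [Finset.mem_range] at hm
  by_cases hmk : m ≤ k
  · rw [if_pos hmk]
    by_cases hmi : m ≤ i
    · have hji : i ≤ i + k - m := by omega
      have hjk : k ≤ i + k - m := by omega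
      rw [M_eq _ _ _ hji hjk (by omega)]
      have hm2 : i + k - (i + k - m) = m := by omega
      rw [hm2]
      rcases le_or_gt (i + k - m) n with hn | hn
      · have key := Nat.choose_mul (n := n) (k := i + k - m) (s := i) hji
        have h3 : i + k - m - i = k - m := by omega
        rw [h3] at key
        calc n.choose i * (i.choose m * (n - i).choose (k - m))
            = i.choose m * (n.choose i * (n - i).choose (k - m)) := by ring
          _ = i.choose m * (n.choose (i + k - m) * (i + k - m).choose i) := by rw [key]
          _ = (i + k - m).choose i * i.choose m * n.choose (i + k - m) := by ring
      · rw [Nat.choose_eq_zero_of_lt hn,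
          Nat.choose_eq_zero_of_lt (show n - i < k - m by omega)]
        ring
    · rw [M, if_neg (by omega), Nat.choose_eq_zero_of_lt (show i < m by omega)]
      ring
  · rw [if_neg hmk, M, if_neg (by omega), Nat.zero_mul]
end

section
/- For every nonnegative integer k and every integer r ≥ 1 there exist integers a_{k,0}, a_{k,1}, …, a_{k,rk} such that for all nonnegative integers n: (C(n,k)·C(n+k,k))^r = Σ_{j=0}^{r·k} a_{k,j}·C(n,j)·C(n+j,j). -/
private lemma v1 (a b : ℕ) :
    ((b : ℤ) + 1) * (a.choose (b + 1) : ℤ) = ((a : ℤ) - b) * (a.choose b : ℤ) := by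
  rcases le_or_gt b a with h | h
  · have h1 : a.choose (b + 1) * (b + 1) = a.choose b * (a - b) := Nat.choose_succ_right_eq a b
    have h2 : ((a - b : ℕ) : ℤ) = (a : ℤ) - b := by
      have := Int.ofNat_sub h; exact_mod_cast this
    have h3 : ((a.choose (b + 1) * (b + 1) : ℕ) : ℤ) = ((a.choose b * (a - b) : ℕ) : ℤ) :=
      congrArg (Nat.cast : ℕ → ℤ) h1
    push_cast [h2] at h3
    linarith
  · rw [Nat.choose_eq_zero_of_lt h, Nat.choose_eq_zero_of_lt (h.trans (Nat.lt_succ_self b))]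
    push_cast; ring

private lemma absorb (a b : ℕ) :
    ((a : ℤ) + 1 - b) * ((a + 1).choose b : ℤ) = ((a : ℤ) + 1) * (a.choose b : ℤ) := by
  have h1 : (a + 1) * a.choose b = (a + 1).choose (b + 1) * (b + 1) := Nat.add_one_mul_choose_eq a b
  have h1' : ((a : ℤ) + 1) * (a.choose b : ℤ) = ((a + 1).choose (b + 1) : ℤ) * ((b : ℤ) + 1) := by
    exact_mod_cast congrArg (Nat.cast : ℕ → ℤ) h1
  have h2 := v1 (a + 1) b
  push_cast at h2
  linarith [h2, h1']

private lemma recur (j k s : ℕ) :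
    ((k : ℤ) + 1) ^ 2 * ((s + 1).choose j : ℤ) * ((s + 1).choose (k + 1) : ℤ)
        * ((j + k + 1).choose (s + 1) : ℤ)
      = ((s : ℤ) + 1) ^ 2 * (s.choose j : ℤ) * (s.choose k : ℤ) * ((j + k).choose s : ℤ)
        + (((s : ℤ) + 1) * ((s : ℤ) + 2) - (k : ℤ) * ((k : ℤ) + 1))
          * ((s + 1).choose j : ℤ) * ((s + 1).choose k : ℤ) * ((j + k).choose (s + 1) : ℤ) := by
  have h1 := v1 (s + 1) k
  have h2 : (((j + k + 1).choose (s + 1) : ℕ) : ℤ)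
      = ((j + k).choose s : ℤ) + ((j + k).choose (s + 1) : ℤ) := by
    exact_mod_cast congrArg (Nat.cast : ℕ → ℤ) (Nat.choose_succ_succ (j + k) s)
  have h3 := absorb s k
  have h4 := absorb s j
  have h5 := v1 (j + k) s
  push_cast at h1 h5
  linear_combination
    (((k : ℤ) + 1) ^ 2 * ((s + 1).choose j : ℤ) * ((s + 1).choose (k + 1) : ℤ)) * h2
    + (((k : ℤ) + 1) * ((s + 1).choose j : ℤ)
        * (((j + k).choose (s + 1) : ℤ) + ((j + k).choose s : ℤ))) * h1
    + ((((k : ℤ) + 1) * ((s + 1).choose j : ℤ) * ((j + k).choose s : ℤ)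
        - ((s : ℤ) + 1) * ((s + 1).choose j : ℤ) * ((j + k).choose (s + 1) : ℤ))) * h3
    + (-(((s : ℤ) + 1) * ((s + 1).choose j : ℤ) * (s.choose k : ℤ))) * h5
    + (((s : ℤ) + 1) * (s.choose k : ℤ) * ((j + k).choose s : ℤ)) * h4

private lemma stepB (n m : ℕ) :
    ((m : ℤ) + 1) ^ 2 * ((n.choose (m + 1) : ℤ) * ((n + (m + 1)).choose (m + 1) : ℤ))
      = (((n : ℤ) - m) * ((n : ℤ) + m + 1)) * ((n.choose m : ℤ) * ((n + m).choose m : ℤ)) := by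
  have h1 := v1 n m
  have h2 : ((m : ℤ) + 1) * ((n + m + 1).choose (m + 1) : ℤ)
      = ((n : ℤ) + m + 1) * ((n + m).choose m : ℤ) := by
    have := Nat.add_one_mul_choose_eq (n + m) m
    have h' : (((n + m + 1) * (n + m).choose m : ℕ) : ℤ)
        = (((n + m + 1).choose (m + 1) * (m + 1) : ℕ) : ℤ) := congrArg (Nat.cast : ℕ → ℤ) this
    push_cast at h'
    linarith
  have hadd : n + (m + 1) = n + m + 1 := by omega
  rw [hadd]
  linear_combination (((m : ℤ) + 1) * ((n + m + 1).choose (m + 1) : ℤ)) * h1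
    + (((n : ℤ) - m) * (n.choose m : ℤ)) * h2


private def cc (j k m : ℕ) : ℤ := (m.choose j : ℤ) * (m.choose k : ℤ) * ((j + k).choose m : ℤ)

private lemma prod_lemma (j k n : ℕ) :
    ((n.choose j : ℤ) * ((n + j).choose j : ℤ)) * ((n.choose k : ℤ) * ((n + k).choose k : ℤ))
      = ∑ m ∈ Finset.range (j + k + 1),
          cc j k m * ((n.choose m : ℤ) * ((n + m).choose m : ℤ)) := by
  induction k with
  | zero =>
      rw [Finset.sum_eq_single_of_mem j (Finset.self_mem_range_succ j)]
      · simp [cc]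
      · intro m hm hne
        have hmlt : m < j := by
          have := Finset.mem_range.mp hm; omega
        simp [cc, Nat.choose_eq_zero_of_lt hmlt]
  | succ k ih =>
      have hc : ((k : ℤ) + 1) ^ 2 ≠ 0 := by positivity
      apply mul_left_cancel₀ hc
      set B : ℕ → ℤ := fun m => (n.choose m : ℤ) * ((n + m).choose m : ℤ) with hB
      set S1 : ℤ := ∑ m ∈ Finset.range (j + k + 1),
          ((m : ℤ) + 1) ^ 2 * cc j k m * B (m + 1) with hS1
      set S2 : ℤ := ∑ m ∈ Finset.range (j + k + 1),
          ((m : ℤ) * ((m : ℤ) + 1) - (k : ℤ) * ((k : ℤ) + 1)) * cc j k m * B m with hS2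
      have key : ((k : ℤ) + 1) ^ 2 * (B j * B (k + 1)) = S1 + S2 := by
        have e1 : ((k : ℤ) + 1) ^ 2 * (B j * B (k + 1))
            = (((n : ℤ) - k) * ((n : ℤ) + k + 1)) * (B j * B k) := by
          have := stepB n k
          simp only [hB]
          linear_combination (↑(n.choose j) * ↑((n + j).choose j) : ℤ) * this
        rw [e1, ih, Finset.mul_sum, hS1, hS2, ← Finset.sum_add_distrib]
        refine Finset.sum_congr rfl (fun m hm => ?_)
        have := stepB n m
        simp only [hB]
        linear_combination (-(cc j k m)) * this
      rw [key]
      -- now handle the right-hand side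
      have hrhs : ((k : ℤ) + 1) ^ 2 * ∑ m ∈ Finset.range (j + (k + 1) + 1),
          cc j (k + 1) m * B m = S1 + S2 := by
        rw [Finset.mul_sum, show j + (k + 1) + 1 = (j + k + 1) + 1 from by omega,
          Finset.sum_range_succ']
        have hzero0 : ((k : ℤ) + 1) ^ 2 * (cc j (k + 1) 0 * B 0) = 0 := by
          have : (0 : ℕ).choose (k + 1) = 0 := Nat.choose_eq_zero_of_lt (Nat.succ_pos k)
          simp [cc, this]
        rw [hzero0, add_zero]
        have hterm : ∀ m ∈ Finset.range (j + k + 1),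
            ((k : ℤ) + 1) ^ 2 * (cc j (k + 1) (m + 1) * B (m + 1))
              = ((m : ℤ) + 1) ^ 2 * cc j k m * B (m + 1)
                + (((m : ℤ) + 1) * ((m : ℤ) + 2) - (k : ℤ) * ((k : ℤ) + 1))
                  * cc j k (m + 1) * B (m + 1) := by
          intro m _
          have := recur j k m
          simp only [cc, show j + (k + 1) = j + k + 1 from by omega]
          linear_combination (B (m + 1)) * this
        rw [Finset.sum_congr rfl hterm, Finset.sum_add_distrib]
        congr 1
        -- second sums: shift
        set g : ℕ → ℤ := fun m =>
          ((m : ℤ) * ((m : ℤ) + 1) - (k : ℤ) * ((k : ℤ) + 1)) * cc j k m * B m with hg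
        have hg0 : g 0 = 0 := by
          rcases Nat.eq_zero_or_pos k with hk | hk
          · subst hk; simp [hg]
          · have : (0 : ℕ).choose k = 0 := Nat.choose_eq_zero_of_lt hk
            simp [hg, cc, this]
        have hgN : g (j + k + 1) = 0 := by
          have : (j + k).choose (j + k + 1) = 0 := Nat.choose_eq_zero_of_lt (Nat.lt_succ_self _)
          simp [hg, cc, this]
        have h1 : ∑ m ∈ Finset.range (j + k + 1 + 1), g m
            = ∑ m ∈ Finset.range (j + k + 1), g (m + 1) + g 0 := Finset.sum_range_succ' g _
        have h2 : ∑ m ∈ Finset.range (j + k + 1 + 1), g m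
            = ∑ m ∈ Finset.range (j + k + 1), g m + g (j + k + 1) := Finset.sum_range_succ g _
        have h3 : ∑ m ∈ Finset.range (j + k + 1), g (m + 1)
            = ∑ m ∈ Finset.range (j + k + 1), g m := by
          rw [hg0] at h1; rw [hgN] at h2; linarith
        calc ∑ m ∈ Finset.range (j + k + 1),
              (((m : ℤ) + 1) * ((m : ℤ) + 2) - (k : ℤ) * ((k : ℤ) + 1)) * cc j k (m + 1) * B (m + 1)
            = ∑ m ∈ Finset.range (j + k + 1), g (m + 1) := by
              refine Finset.sum_congr rfl (fun m hm => ?_); simp only [hg]; push_cast; ring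
          _ = ∑ m ∈ Finset.range (j + k + 1), g m := h3
          _ = S2 := by rw [hS2]
      rw [hrhs]

/-- Schmidt-type integrality for `f(n,k) = C(n,k)·C(n+k,k)`. -/
theorem stmt_5 (k r : ℕ) (hr : 1 ≤ r) :
    ∃ a : ℕ → ℤ, ∀ n : ℕ,
      ((n.choose k * (n + k).choose k : ℤ)) ^ r =
        ∑ j ∈ Finset.range (r * k + 1),
          a j * (n.choose j * (n + j).choose j : ℤ) := by
  clear hr
  induction r with
  | zero =>
      refine ⟨fun _ => 1, fun n => ?_⟩
      simp
  | succ r ih =>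
      obtain ⟨a, ha⟩ := ih
      refine ⟨fun t => ∑ m ∈ Finset.range (r * k + 1), a m * cc m k t, fun n => ?_⟩
      rw [pow_succ, ha n, Finset.sum_mul]
      have h1 : ∀ m ∈ Finset.range (r * k + 1),
          a m * ((n.choose m : ℤ) * ((n + m).choose m : ℤ))
              * ((n.choose k : ℤ) * ((n + k).choose k : ℤ))
            = ∑ t ∈ Finset.range (r * k + k + 1),
                a m * (cc m k t * ((n.choose t : ℤ) * ((n + t).choose t : ℤ))) := by
        intro m hm
        have hmle : m + k + 1 ≤ r * k + k + 1 := by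
          have := Finset.mem_range.mp hm; omega
        calc a m * ((n.choose m : ℤ) * ((n + m).choose m : ℤ))
              * ((n.choose k : ℤ) * ((n + k).choose k : ℤ))
            = a m * (((n.choose m : ℤ) * ((n + m).choose m : ℤ))
              * ((n.choose k : ℤ) * ((n + k).choose k : ℤ))) := by ring
          _ = a m * ∑ t ∈ Finset.range (m + k + 1),
                cc m k t * ((n.choose t : ℤ) * ((n + t).choose t : ℤ)) := by
              rw [prod_lemma m k n]
          _ = ∑ t ∈ Finset.range (m + k + 1),
                a m * (cc m k t * ((n.choose t : ℤ) * ((n + t).choose t : ℤ))) :=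
              Finset.mul_sum _ _ _
          _ = ∑ t ∈ Finset.range (r * k + k + 1),
                a m * (cc m k t * ((n.choose t : ℤ) * ((n + t).choose t : ℤ))) := by
              refine Finset.sum_subset (Finset.range_subset_range.mpr hmle) (fun t ht hts => ?_)
              have h1 := Finset.mem_range.mp ht
              have h2 : ¬ t < m + k + 1 := fun h => hts (Finset.mem_range.mpr h)
              have : (m + k).choose t = 0 := Nat.choose_eq_zero_of_lt (by omega)
              simp [cc, this]
      rw [Finset.sum_congr rfl h1, Finset.sum_comm,
        show (r + 1) * k + 1 = r * k + k + 1 from by ring_nf]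
      refine Finset.sum_congr rfl (fun t ht => ?_)
      rw [Finset.sum_mul]
      refine Finset.sum_congr rfl (fun m hm => ?_)
      ring
end

section
/- For every nonnegative integer k and every integer r ≥ 1 there exist integers a_{k,0}, a_{k,1}, …, a_{k,rk} such that for all nonnegative integers n: C(n+k,k)^r = Σ_{j=0}^{r·k} a_{k,j}·C(n+j,j). -/
open Finset Function Polynomial

private lemma my_cast_fwdDiff (f : ℕ → ℤ) (m x : ℕ) :
    ((((fwdDiff 1)^[m] f) x : ℤ) : ℚ) = ((fwdDiff 1)^[m] (fun n => (f n : ℚ))) x := by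
  rw [fwdDiff_iter_eq_sum_shift, fwdDiff_iter_eq_sum_shift]
  simp only [zsmul_eq_mul]
  push_cast
  rfl

private lemma my_fwdDiff_poly (d : ℕ) : ∀ P : Polynomial ℚ, P.natDegree ≤ d →
    (fwdDiff 1)^[d+1] (fun n : ℕ => P.eval (n : ℚ)) = 0 := by
  induction d with
  | zero =>
    intro P hP
    obtain ⟨c, rfl⟩ := Polynomial.natDegree_eq_zero.mp (Nat.le_zero.mp hP)
    funext n
    simp [fwdDiff]
  | succ d IH =>
    intro P hP
    set Q := P.comp (X + C 1) - P with hQ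
    have hcompdeg : (P.comp (X + C 1)).natDegree = P.natDegree := by
      rw [Polynomial.natDegree_comp, Polynomial.natDegree_X_add_C, mul_one]
    have hQd : Q.natDegree ≤ d := by
      rw [Polynomial.natDegree_le_iff_coeff_eq_zero]
      intro m hm
      rw [hQ, Polynomial.coeff_sub, sub_eq_zero]
      rcases lt_or_eq_of_le (show P.natDegree ≤ m by omega) with h | h
      · rw [Polynomial.coeff_eq_zero_of_natDegree_lt (hcompdeg ▸ h),
          Polynomial.coeff_eq_zero_of_natDegree_lt h]
      · subst h
        conv_lhs => rw [← hcompdeg]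
        rw [Polynomial.coeff_natDegree, Polynomial.coeff_natDegree,
          Polynomial.leadingCoeff_comp (by rw [Polynomial.natDegree_X_add_C]; norm_num)]
        have h1 : ((X : ℚ[X]) + 1).leadingCoeff = 1 := by
          rw [← Polynomial.C_1]
          exact (Polynomial.monic_X_add_C 1).leadingCoeff
        simp [h1]
    have hstep : fwdDiff 1 (fun n : ℕ => P.eval (n : ℚ)) = fun n : ℕ => Q.eval (n : ℚ) := by
      funext n
      simp only [fwdDiff, hQ, Polynomial.eval_sub, Polynomial.eval_comp, Polynomial.eval_add,
        Polynomial.eval_X, Polynomial.eval_C]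
      push_cast
      ring
    rw [show d + 1 + 1 = d + 1 + 1 from rfl, Function.iterate_succ_apply, hstep]
    exact IH Q hQd

private lemma my_newton_basis (D : ℕ) : ∀ f : ℕ → ℤ, (fwdDiff 1)^[D] f = 0 →
    ∃ a : ℕ → ℤ, ∀ n, f n = ∑ j ∈ Finset.range D, a j * ((n + j).choose j : ℤ) := by
  induction D with
  | zero =>
    intro f hf
    exact ⟨0, fun n => by simpa using congrFun hf n⟩
  | succ D IH =>
    intro f hf
    obtain ⟨b, hb⟩ := IH (fwdDiff 1 f) (by rw [← Function.iterate_succ_apply]; exact hf)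
    have claimA : ∀ n, f n = f 0 + ∑ j ∈ Finset.range D, b j * ((n + j).choose (j+1) : ℤ) := by
      intro n
      induction n with
      | zero =>
        simp [Nat.choose_eq_zero_of_lt (Nat.lt_succ_self _)]
      | succ n ih =>
        have hfs : f (n+1) = f n + fwdDiff 1 f n := by simp [fwdDiff]
        rw [hfs, ih, hb n, add_assoc, ← Finset.sum_add_distrib]
        congr 1
        apply Finset.sum_congr rfl
        intro j hj
        rw [show n + 1 + j = (n + j) + 1 by ring, ← mul_add]
        congr 1
        rw [Nat.choose_succ_succ (n+j) j]
        push_cast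
        ring
    refine ⟨fun j => (if j = 0 then f 0 else b (j-1)) - (if j < D then b j else 0), fun n => ?_⟩
    have sumsplit : ∑ j ∈ Finset.range (D+1),
          ((if j = 0 then f 0 else b (j-1)) - (if j < D then b j else 0)) * ((n + j).choose j : ℤ)
        = (∑ j ∈ Finset.range (D+1), (if j = 0 then f 0 else b (j-1)) * ((n+j).choose j : ℤ))
          - ∑ j ∈ Finset.range (D+1), (if j < D then b j else 0) * ((n+j).choose j : ℤ) := by
      rw [← Finset.sum_sub_distrib]
      apply Finset.sum_congr rfl
      intro j _
      ring
    rw [claimA n, sumsplit, Finset.sum_range_succ' _ D, Finset.sum_range_succ _ D]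
    simp only [Nat.succ_ne_zero, if_neg, Nat.add_sub_cancel, lt_irrefl, if_pos rfl,
      Nat.add_zero, Nat.choose_zero_right, Nat.cast_one, mul_one, zero_mul]
    have : ∀ j ∈ Finset.range D, (if j < D then b j else 0) * ((n+j).choose j : ℤ)
        = b j * ((n+j).choose j : ℤ) := by
      intro j hj
      rw [if_pos (Finset.mem_range.mp hj)]
    rw [Finset.sum_congr rfl this]
    have pascal : ∀ j ∈ Finset.range D, b j * ((n + j).choose (j+1) : ℤ)
        = b j * ((n + (j+1)).choose (j+1) : ℤ) - b j * ((n+j).choose j : ℤ) := by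
      intro j _
      rw [show n + (j+1) = (n + j) + 1 by ring, Nat.choose_succ_succ (n+j) j]
      push_cast
      ring
    rw [Finset.sum_congr rfl pascal, Finset.sum_sub_distrib]
    simp only [if_true, if_false, zero_mul, add_zero]
    ring

/-- Schmidt-type integrality for `f(n,k) = C(n+k,k)`. -/
theorem stmt_8 (k r : ℕ) (hr : 1 ≤ r) :
    ∃ a : ℕ → ℤ, ∀ n : ℕ,
      (((n + k).choose k : ℤ)) ^ r =
        ∑ j ∈ Finset.range (r * k + 1), a j * ((n + j).choose j : ℤ) := by
  set f : ℕ → ℤ := fun n => (((n + k).choose k : ℤ)) ^ r with hf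
  set P : Polynomial ℚ :=
    (C ((k.factorial : ℚ))⁻¹ * (ascPochhammer ℚ k).comp (X + C 1))^r with hP
  have heval : ∀ n : ℕ, P.eval (n : ℚ) = ((f n : ℤ) : ℚ) := by
    intro n
    have h1 : (ascPochhammer ℚ k).eval ((n : ℚ) + 1) = ((n+1).ascFactorial k : ℚ) := by
      rw [← Nat.cast_one, ← Nat.cast_add, ← ascPochhammer_eval_cast,
        ascPochhammer_nat_eq_ascFactorial]
    simp only [hP, hf, Polynomial.eval_pow, Polynomial.eval_mul, Polynomial.eval_C,
      Polynomial.eval_comp, Polynomial.eval_add, Polynomial.eval_X, h1,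
      Nat.ascFactorial_eq_factorial_mul_choose]
    push_cast
    rw [inv_mul_cancel_left₀ (by exact_mod_cast k.factorial_ne_zero)]
  have hdeg : P.natDegree ≤ r * k := by
    rw [hP, Polynomial.natDegree_pow]
    refine Nat.mul_le_mul_left r ?_
    refine (Polynomial.natDegree_C_mul_le _ _).trans ?_
    rw [Polynomial.natDegree_comp, Polynomial.natDegree_X_add_C, mul_one,
      ascPochhammer_natDegree]
  have hΔ : (fwdDiff 1)^[r*k+1] f = 0 := by
    funext x
    have := congrFun (my_fwdDiff_poly (r*k) P hdeg) x
    rw [show (fun n : ℕ => P.eval (n : ℚ)) = fun n : ℕ => ((f n : ℤ) : ℚ) from funext heval]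
      at this
    have h2 := my_cast_fwdDiff f (r*k+1) x
    rw [this] at h2
    simp only [Pi.zero_apply] at h2 ⊢
    exact_mod_cast h2
  exact my_newton_basis (r*k+1) f hΔ
end

section
/- Let K = ℚ(q) be the field of rational functions over ℚ in the indeterminate q. Let f : ℕ × ℕ → K, S : ℕ × ℕ × ℕ → K with S(k,j,i) = 0 for j > i+k, and A : ℕ × ℕ × ℕ × ℕ → ℤ satisfy f(n,i)·f(n,k) = Σ_{j=0}^{i+k} q^{A(k,j,i,n)}·S(k,j,i)·f(n,j) for all n, i, k ≥ 0. Let B : ℕ × ℕ × ℕ → ℤ and C : ℕ × ℕ × ℕ × ℕ → ℤ satisfy B(k,j,i) + C(k,j,r+1,n) = A(k,j,i,n) + C(k,i,r,n) for all k,j,i,n ≥ 0 and r ≥ 1, and C(k,k,1,n) = 0 for all k, n ≥ 0. Define P^{(r)}_{k,j} ∈ K recursively by P^{(1)}_{k,k} = 1, P^{(1)}_{k,j} = 0 for j ≠ k, and P^{(r+1)}_{k,j} = Σ_{i=0}^{r·k} q^{B(k,j,i)}·S(k,j,i)·P^{(r)}_{k,i}. Then for all k ≥ 0, r ≥ 1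 and n ≥ 0: f(n,k)^r = Σ_{j=0}^{r·k} q^{C(k,j,r,n)}·f(n,j)·P^{(r)}_{k,j}. -/
open RatFunc in
/-- Theorem 3.1 of the paper (general $q$-analog), in the field `ℚ(q) = RatFunc ℚ`
with `q = RatFunc.X`. -/
theorem stmt_9 (f : ℕ × ℕ → RatFunc ℚ) (S : ℕ × ℕ × ℕ → RatFunc ℚ)
    (A : ℕ × ℕ × ℕ × ℕ → ℤ)
    (hS : ∀ k j i : ℕ, j > i + k → S (k, j, i) = 0)
    (hf : ∀ n i k : ℕ,
      f (n, i) * f (n, k) =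
        ∑ j ∈ Finset.range (i + k + 1),
          (RatFunc.X : RatFunc ℚ) ^ A (k, j, i, n) * S (k, j, i) * f (n, j))
    (B : ℕ × ℕ × ℕ → ℤ) (C : ℕ × ℕ × ℕ × ℕ → ℤ)
    (hBC : ∀ k j i n r : ℕ, 1 ≤ r →
      B (k, j, i) + C (k, j, r + 1, n) = A (k, j, i, n) + C (k, i, r, n))
    (hC1 : ∀ k n : ℕ, C (k, k, 1, n) = 0)
    (P : ℕ → ℕ → ℕ → RatFunc ℚ)
    (hP_init : ∀ k j : ℕ, P 1 k j = if j = k then 1 else 0)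
    (hP_rec : ∀ r k j : ℕ, 1 ≤ r →
      P (r + 1) k j =
        ∑ i ∈ Finset.range (r * k + 1),
          (RatFunc.X : RatFunc ℚ) ^ B (k, j, i) * S (k, j, i) * P r k i) :
    ∀ k r n : ℕ, 1 ≤ r →
      f (n, k) ^ r =
        ∑ j ∈ Finset.range (r * k + 1),
          (RatFunc.X : RatFunc ℚ) ^ C (k, j, r, n) * f (n, j) * P r k j := by

  intro k r n hr
  induction r with
  | zero => omega
  | succ r ih =>
    rcases Nat.lt_or_ge r 1 with h1 | hr'
    · obtain rfl : r = 0 := by omega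
      simp only [pow_one, hP_init]
      rw [Finset.sum_eq_single k]
      · simp [hC1]
      · intro j _ hj; simp [hj]
      · intro h; exact absurd (Finset.mem_range.2 (by omega)) h
    · have ihr := ih hr'
      have hX : (RatFunc.X : RatFunc ℚ) ≠ 0 := RatFunc.X_ne_zero
      rw [pow_succ, ihr, Finset.sum_mul]
      have key : ∀ i ∈ Finset.range (r * k + 1),
          (RatFunc.X : RatFunc ℚ) ^ C (k, i, r, n) * f (n, i) * P r k i * f (n, k)
          = ∑ j ∈ Finset.range ((r + 1) * k + 1),
              (RatFunc.X : RatFunc ℚ) ^ C (k, i, r, n) * P r k i *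
                ((RatFunc.X : RatFunc ℚ) ^ A (k, j, i, n) * S (k, j, i) * f (n, j)) := by
        intro i hi
        have hi' : i ≤ r * k := by simpa [Nat.lt_succ_iff] using hi
        have hik : i + k + 1 ≤ (r + 1) * k + 1 := by
          have : i + k ≤ (r + 1) * k := by nlinarith
          omega
        calc (RatFunc.X : RatFunc ℚ) ^ C (k, i, r, n) * f (n, i) * P r k i * f (n, k)
            = (RatFunc.X : RatFunc ℚ) ^ C (k, i, r, n) * P r k i * (f (n, i) * f (n, k)) := by
              ring
          _ = (RatFunc.X : RatFunc ℚ) ^ C (k, i, r, n) * P r k i *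
              ∑ j ∈ Finset.range (i + k + 1),
                (RatFunc.X : RatFunc ℚ) ^ A (k, j, i, n) * S (k, j, i) * f (n, j) := by
              rw [hf]
          _ = ∑ j ∈ Finset.range (i + k + 1),
                (RatFunc.X : RatFunc ℚ) ^ C (k, i, r, n) * P r k i *
                  ((RatFunc.X : RatFunc ℚ) ^ A (k, j, i, n) * S (k, j, i) * f (n, j)) := by
              rw [Finset.mul_sum]
          _ = _ := by
              apply Finset.sum_subset (Finset.range_subset_range.2 hik)
              intro j hj hj'
              have hjgt : j > i + k := by
                simp only [Finset.mem_range] at hj hj'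
                omega
              rw [hS k j i hjgt]; ring
      rw [Finset.sum_congr rfl key, Finset.sum_comm]
      apply Finset.sum_congr rfl
      intro j _
      rw [hP_rec r k j hr', Finset.mul_sum]
      apply Finset.sum_congr rfl
      intro i _
      have hadd := hBC k j i n r hr'
      have : (RatFunc.X : RatFunc ℚ) ^ C (k, i, r, n) * (RatFunc.X : RatFunc ℚ) ^ A (k, j, i, n)
          = (RatFunc.X : RatFunc ℚ) ^ B (k, j, i) * (RatFunc.X : RatFunc ℚ) ^ C (k, j, r + 1, n) := by
        rw [← zpow_add₀ hX, ← zpow_add₀ hX, add_comm (C (k, i, r, n)), hadd]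
      calc (RatFunc.X : RatFunc ℚ) ^ C (k, i, r, n) * P r k i *
            ((RatFunc.X : RatFunc ℚ) ^ A (k, j, i, n) * S (k, j, i) * f (n, j))
          = (RatFunc.X : RatFunc ℚ) ^ C (k, i, r, n) * (RatFunc.X : RatFunc ℚ) ^ A (k, j, i, n)
              * (P r k i * S (k, j, i) * f (n, j)) := by ring
        _ = (RatFunc.X : RatFunc ℚ) ^ B (k, j, i) * (RatFunc.X : RatFunc ℚ) ^ C (k, j, r + 1, n)
              * (P r k i * S (k, j, i) * f (n, j)) := by rw [this]
        _ = _ := by ring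
end

section
/- In the field ℚ(q), for all nonnegative integers n, i, k: [n,i]·[n+i,i]·[n,k]·[n+k,k] = Σ_{j=0}^{i+k} q^{(n-j)(k+i-j)}·[i+k,i]·Mq(j;i,k)·[n,j]·[n+j,j]. -/
/-- The $q$-factorial `(q)_n = (1-q)(1-q²)⋯(1-qⁿ)` in `ℚ(q) = RatFunc ℚ`. -/
noncomputable def qfac (n : ℕ) : RatFunc ℚ :=
  ∏ m ∈ Finset.range n, (1 - (RatFunc.X : RatFunc ℚ) ^ (m + 1))

/-- The Gaussian binomial coefficient `[n, k]` in `ℚ(q)`. -/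
noncomputable def qbinom (n k : ℕ) : RatFunc ℚ :=
  if k ≤ n then qfac n / (qfac k * qfac (n - k)) else 0

/-- The $q$-multinomial coefficient `Mq(j; i, k)` in `ℚ(q)`: it equals
`(q)_j/((q)_{j-i}(q)_{j-k}(q)_{i+k-j})` when `max i k ≤ j ≤ i + k`, and `0`
otherwise. -/
noncomputable def qmulti (j i k : ℕ) : RatFunc ℚ :=
  if i ≤ j ∧ k ≤ j ∧ j ≤ i + k then
    qfac j / (qfac (j - i) * qfac (j - k) * qfac (i + k - j))
  else 0

local notation "Xq" => (RatFunc.X : RatFunc ℚ)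

lemma qfac_zero : qfac 0 = 1 := Finset.prod_range_zero _

lemma qfac_succ (n : ℕ) : qfac (n + 1) = qfac n * (1 - Xq ^ (n + 1)) :=
  Finset.prod_range_succ _ _

lemma X_pow_ne_one (t : ℕ) (ht : 1 ≤ t) : Xq ^ t ≠ 1 := by
  intro h
  have h2 : (Polynomial.X : Polynomial ℚ) ^ t = 1 := by
    apply RatFunc.algebraMap_injective (K := ℚ)
    simpa [map_pow, RatFunc.algebraMap_X] using h
  have := congrArg Polynomial.natDegree h2
  simp [Polynomial.natDegree_X_pow] at this
  omega

lemma one_sub_X_pow_ne_zero (t : ℕ) (ht : 1 ≤ t) : 1 - Xq ^ t ≠ 0 := by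
  intro h
  exact X_pow_ne_one t ht (by linear_combination -h)

lemma qfac_ne_zero (n : ℕ) : qfac n ≠ 0 := by
  unfold qfac
  apply Finset.prod_ne_zero_iff.2
  intro m _
  exact one_sub_X_pow_ne_zero _ (by omega)

/-- The summand of the right-hand side. -/
noncomputable def TT (n i k j : ℕ) : RatFunc ℚ :=
  (RatFunc.X : RatFunc ℚ) ^ (((n : ℤ) - j) * ((k : ℤ) + i - j)) *
    (qbinom (i + k) i * qmulti j i k) * qbinom n j * qbinom (n + j) j

/-- The telescoping certificate term. -/
noncomputable def gg (n i k j : ℕ) : RatFunc ℚ :=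
  if j ≤ i + k + 1 ∧ j ≤ n + 2 then
    Xq ^ ((i + k + 1 - j) * (n + 1 - j)) * (1 + Xq ^ (n + 1)) * qfac (i + k) * qfac (n + j)
      * (1 - Xq ^ (j - i)) * (1 - Xq ^ (j - k)) * (1 - Xq ^ j)
      * (1 - Xq ^ (i + k + 1 - j)) * (1 - Xq ^ (n + 2 - j))
      / (qfac i * qfac k * qfac (j - i) * qfac (j - k) * qfac (i + k + 1 - j) * qfac j
          * qfac (n + 2 - j))
  else 0

lemma Lrec (n i k : ℕ) (hi : i ≤ n) (hk : k ≤ n) :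
    (1 - Xq ^ (n + 1 - i)) * (1 - Xq ^ (n + 1 - k)) *
      (qbinom (n+1) i * qbinom (n+1+i) i * qbinom (n+1) k * qbinom (n+1+k) k)
    = (1 - Xq ^ (n + 1 + i)) * (1 - Xq ^ (n + 1 + k)) *
      (qbinom n i * qbinom (n+i) i * qbinom n k * qbinom (n+k) k) := by
  obtain ⟨p, hp⟩ : ∃ p, n = i + p := ⟨n - i, by omega⟩
  obtain ⟨r, hr⟩ : ∃ r, n = k + r := ⟨n - k, by omega⟩
  simp only [qbinom]
  rw [if_pos (by omega : i ≤ n+1), if_pos (by omega : i ≤ n+1+i),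
      if_pos (by omega : k ≤ n+1), if_pos (by omega : k ≤ n+1+k),
      if_pos hi, if_pos (by omega : i ≤ n+i), if_pos hk, if_pos (by omega : k ≤ n+k)]
  rw [show n + 1 - i = p + 1 by omega, show n + 1 + i - i = n + 1 by omega,
      show n - i = p by omega, show n + i - i = n by omega,
      show n + 1 - k = r + 1 by omega, show n + 1 + k - k = n + 1 by omega,
      show n - k = r by omega, show n + k - k = n by omega,
      show n + 1 + i = n + i + 1 by omega, show n + 1 + k = n + k + 1 by omega]
  rw [qfac_succ (n+i), qfac_succ (n+k), qfac_succ n, qfac_succ p, qfac_succ r]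
  have h1 := qfac_ne_zero n; have h2 := qfac_ne_zero i; have h3 := qfac_ne_zero k
  have h4 := qfac_ne_zero p; have h5 := qfac_ne_zero r
  have h6 := qfac_ne_zero (n+i); have h7 := qfac_ne_zero (n+k)
  have h8 := one_sub_X_pow_ne_zero (n+1) (by omega)
  have h9 := one_sub_X_pow_ne_zero (p+1) (by omega)
  have h10 := one_sub_X_pow_ne_zero (r+1) (by omega)
  simp only [div_mul_eq_mul_div, mul_div_assoc', div_mul_div_comm, div_div]
  rw [div_eq_div_iff (by simp [mul_eq_zero, h1,h2,h3,h4,h5,h8,h9,h10])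
      (by simp [mul_eq_zero, h1,h2,h3,h4,h5,h6,h7])]
  ring

set_option maxHeartbeats 1000000 in
lemma star (n i k j : ℕ) (hi : i ≤ n) (hk : k ≤ n) (hj : j ≤ i + k) :
    (1 - Xq ^ (n + 1 - i)) * (1 - Xq ^ (n + 1 - k)) * TT (n+1) i k j
      - (1 - Xq ^ (n + 1 + i)) * (1 - Xq ^ (n + 1 + k)) * TT n i k j
    = gg n i k j - gg n i k (j+1) := by
  rcases lt_or_ge j i with hji | hji
  · -- j < i : everything vanishes
    simp only [TT, gg, qmulti]
    rw [if_neg (by omega : ¬(i ≤ j ∧ k ≤ j ∧ j ≤ i + k)),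
        if_pos (⟨by omega, by omega⟩ : j ≤ i + k + 1 ∧ j ≤ n + 2),
        if_pos (⟨by omega, by omega⟩ : j + 1 ≤ i + k + 1 ∧ j + 1 ≤ n + 2),
        show j - i = 0 by omega, show j + 1 - i = 0 by omega]
    simp
  rcases lt_or_ge j k with hjk | hjk
  · -- j < k
    simp only [TT, gg, qmulti]
    rw [if_neg (by omega : ¬(i ≤ j ∧ k ≤ j ∧ j ≤ i + k)),
        if_pos (⟨by omega, by omega⟩ : j ≤ i + k + 1 ∧ j ≤ n + 2),
        if_pos (⟨by omega, by omega⟩ : j + 1 ≤ i + k + 1 ∧ j + 1 ≤ n + 2),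
        show j - k = 0 by omega, show j + 1 - k = 0 by omega]
    simp
  rcases lt_or_ge (n+1) j with hnj | hnj
  · -- n + 1 < j : everything vanishes
    have t1 : qbinom n j = 0 := by rw [qbinom, if_neg (by omega)]
    have t2 : qbinom (n+1) j = 0 := by rw [qbinom, if_neg (by omega)]
    have t4 : gg n i k (j+1) = 0 := by rw [gg, if_neg (by omega)]
    rcases eq_or_lt_of_le (show n + 2 ≤ j by omega) with hj2 | hj2
    · have t3 : gg n i k j = 0 := by
        rw [gg, if_pos (⟨by omega, by omega⟩ : j ≤ i + k + 1 ∧ j ≤ n + 2),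
            show n + 2 - j = 0 by omega]
        simp
      simp only [TT, t1, t2, t3, t4]
      ring
    · have t3 : gg n i k j = 0 := by rw [gg, if_neg (by omega)]
      simp only [TT, t1, t2, t3, t4]
      ring
  rcases lt_or_ge n j with hnj1 | hnj1
  · -- j = n + 1
    have hjn : j = n + 1 := by omega
    subst hjn
    obtain ⟨p, h1⟩ : ∃ p, n = i + p := ⟨n - i, by omega⟩
    obtain ⟨r, h2⟩ : ∃ r, n = k + r := ⟨n - k, by omega⟩
    obtain ⟨c, h3⟩ : ∃ c, i + k = n + 1 + c := ⟨i + k - n - 1, by omega⟩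
    have hI : i = r + c + 1 := by omega
    have hK : k = p + c + 1 := by omega
    have hN : n = p + r + c + 1 := by omega
    clear h1 h2 h3 hi hk hj hji hjk hnj hnj1
    subst hI hK hN
    simp only [TT, gg, qbinom, qmulti]
    split_ifs <;> try omega
    rw [show r+c+1+(p+c+1)-(r+c+1) = p+c+1 by omega,
        show p+r+c+1+1-(r+c+1) = p+1 by omega,
        show p+r+c+1+1-(p+c+1) = r+1 by omega,
        show r+c+1+(p+c+1)-(p+r+c+1+1) = c by omega,
        show p+r+c+1+1-(p+r+c+1+1) = 0 by omega,
        show p+r+c+1+1+(p+r+c+1+1)-(p+r+c+1+1) = p+r+c+1+1 by omega,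
        show r+c+1+(p+c+1)+1-(p+r+c+1+1) = c+1 by omega,
        show p+r+c+1+2-(p+r+c+1+1) = 0+1 by omega,
        show r+c+1+(p+c+1)+1-(p+r+c+1+1+1) = c by omega,
        show p+r+c+1+1-(p+r+c+1+1+1) = 0 by omega,
        show p+r+c+1+1+1-(r+c+1) = p+2 by omega,
        show p+r+c+1+1+1-(p+c+1) = r+2 by omega,
        show p+r+c+1+2-(p+r+c+1+1+1) = 0 by omega,
        show p+r+c+1+(p+r+c+1+1)-(p+r+c+1+1) = p+r+c+1 by omega,
        show p+r+c+1+1+(p+r+c+1+1) = (p+r+c+1+(p+r+c+1+1))+1 by omega]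
    rw [show ((((p+r+c+1+1) : ℕ) : ℤ) - (((p+r+c+1+1) : ℕ) : ℤ)) *
          ((((p+c+1) : ℕ) : ℤ) + (((r+c+1) : ℕ) : ℤ) - (((p+r+c+1+1) : ℕ) : ℤ)) = ((0 : ℕ) : ℤ)
          by push_cast; ring, zpow_natCast]
    rw [qfac_succ (p+r+c+1+(p+r+c+1+1)), qfac_succ c, qfac_succ 0, qfac_zero]
    have n1 := qfac_ne_zero (r+c+1); have n2 := qfac_ne_zero (p+c+1)
    have n3 := qfac_ne_zero (p+1); have n4 := qfac_ne_zero (r+1)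
    have n5 := qfac_ne_zero c; have n6 := qfac_ne_zero (p+r+c+1+1)
    have n7 := qfac_ne_zero (p+r+c+1); have n8 := qfac_ne_zero (p+r+c+1+(p+r+c+1+1))
    have n9 := qfac_ne_zero (p+2); have n10 := qfac_ne_zero (r+2)
    have n11 := qfac_ne_zero (p+r+c+1+(p+r+c+1+1+1))
    have n12 := qfac_ne_zero (r+c+1+(p+c+1))
    have m1 := one_sub_X_pow_ne_zero (c+1) (by omega)
    have m2 := one_sub_X_pow_ne_zero (0+1) (by omega)
    have m3 := one_sub_X_pow_ne_zero (p+r+c+1+(p+r+c+1+1)+1) (by omega)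
    have m4 : 1 - Xq ≠ 0 := by simpa using one_sub_X_pow_ne_zero 1 le_rfl
    have n13 := qfac_ne_zero (p+r+c+1+1+1)
    simp only [div_mul_eq_mul_div, mul_div_assoc', div_mul_div_comm, div_div]
    rw [div_sub_div _ _
        (by simp [mul_eq_zero, n1,n2,n3,n4,n5,n6,n7,n8,n9,n10,n11,n12,n13,m1,m2,m3,m4])
        (by simp [mul_eq_zero, n1,n2,n3,n4,n5,n6,n7,n8,n9,n10,n11,n12,n13,m1,m2,m3,m4])]
    rw [div_sub_div _ _
        (by simp [mul_eq_zero, n1,n2,n3,n4,n5,n6,n7,n8,n9,n10,n11,n12,n13,m1,m2,m3,m4])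
        (by simp [mul_eq_zero, n1,n2,n3,n4,n5,n6,n7,n8,n9,n10,n11,n12,n13,m1,m2,m3,m4])]
    rw [div_eq_div_iff
        (by simp [mul_eq_zero, n1,n2,n3,n4,n5,n6,n7,n8,n9,n10,n11,n12,n13,m1,m2,m3,m4])
        (by simp [mul_eq_zero, n1,n2,n3,n4,n5,n6,n7,n8,n9,n10,n11,n12,n13,m1,m2,m3,m4])]
    ring
  · -- main branch : i ≤ j, k ≤ j, j ≤ n, j ≤ i + k
    obtain ⟨a, h1⟩ : ∃ a, j = i + a := ⟨j - i, by omega⟩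
    obtain ⟨b, h2⟩ : ∃ b, j = k + b := ⟨j - k, by omega⟩
    obtain ⟨c, h3⟩ : ∃ c, i + k = j + c := ⟨i + k - j, by omega⟩
    obtain ⟨d, h4⟩ : ∃ d, n = j + d := ⟨n - j, by omega⟩
    have hI : i = b + c := by omega
    have hK : k = a + c := by omega
    have hJ : j = a + b + c := by omega
    have hN : n = a + b + c + d := by omega
    clear h1 h2 h3 h4 hi hk hj hji hjk hnj hnj1
    subst hI hK hJ hN
    simp only [TT, gg, qbinom, qmulti]
    split_ifs <;> try omega
    rw [show a+b+c+d+1-(b+c) = a+d+1 by omega,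
        show a+b+c+d+1-(a+c) = b+d+1 by omega,
        show b+c+(a+c)-(b+c) = a+c by omega,
        show a+b+c-(b+c) = a by omega,
        show a+b+c-(a+c) = b by omega,
        show b+c+(a+c)-(a+b+c) = c by omega,
        show a+b+c+d+1-(a+b+c) = d+1 by omega,
        show a+b+c+d+1+(a+b+c)-(a+b+c) = a+b+c+d+1 by omega,
        show a+b+c+d-(a+b+c) = d by omega,
        show a+b+c+d+(a+b+c)-(a+b+c) = a+b+c+d by omega,
        show b+c+(a+c)+1-(a+b+c) = c+1 by omega,
        show a+b+c+d+2-(a+b+c) = d+1+1 by omega,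
        show a+b+c+1-(b+c) = a+1 by omega,
        show a+b+c+1-(a+c) = b+1 by omega,
        show b+c+(a+c)+1-(a+b+c+1) = c by omega,
        show a+b+c+d+1-(a+b+c+1) = d by omega,
        show a+b+c+d+2-(a+b+c+1) = d+1 by omega,
        show a+b+c+d+1+(a+b+c) = (a+b+c+d+(a+b+c))+1 by omega,
        show a+b+c+d+(a+b+c+1) = (a+b+c+d+(a+b+c))+1 by omega]
    rw [show (((a+b+c+d : ℕ) : ℤ) - ((a+b+c : ℕ) : ℤ)) * (((a+c : ℕ) : ℤ) + ((b+c : ℕ) : ℤ) - ((a+b+c : ℕ) : ℤ))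
          = ((d*c : ℕ) : ℤ) by push_cast; ring,
        show (((a+b+c+d+1 : ℕ) : ℤ) - ((a+b+c : ℕ) : ℤ)) * (((a+c : ℕ) : ℤ) + ((b+c : ℕ) : ℤ) - ((a+b+c : ℕ) : ℤ))
          = (((d+1)*c : ℕ) : ℤ) by push_cast; ring,
        zpow_natCast, zpow_natCast]
    rw [qfac_succ (a+b+c+d+(a+b+c)), qfac_succ (a+b+c), qfac_succ a, qfac_succ b,
        qfac_succ c, qfac_succ (d+1), qfac_succ d]
    have n1 := qfac_ne_zero (b+c); have n2 := qfac_ne_zero (a+c)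
    have n3 := qfac_ne_zero a; have n4 := qfac_ne_zero b; have n5 := qfac_ne_zero c
    have n6 := qfac_ne_zero d; have n7 := qfac_ne_zero (a+b+c)
    have n8 := qfac_ne_zero (a+b+c+d); have n9 := qfac_ne_zero (a+b+c+d+1)
    have n10 := qfac_ne_zero (a+b+c+d+(a+b+c)); have n11 := qfac_ne_zero (b+c+(a+c))
    have m1 := one_sub_X_pow_ne_zero (a+1) (by omega)
    have m2 := one_sub_X_pow_ne_zero (b+1) (by omega)
    have m3 := one_sub_X_pow_ne_zero (c+1) (by omega)
    have m4 := one_sub_X_pow_ne_zero (d+1) (by omega)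
    have m5 := one_sub_X_pow_ne_zero (d+1+1) (by omega)
    have m6 := one_sub_X_pow_ne_zero (a+b+c+1) (by omega)
    have m7 := one_sub_X_pow_ne_zero (a+b+c+d+(a+b+c)+1) (by omega)
    simp only [div_mul_eq_mul_div, mul_div_assoc', div_mul_div_comm, div_div]
    rw [div_sub_div _ _
        (by simp [mul_eq_zero, n1,n2,n3,n4,n5,n6,n7,n8,n9,n10,n11,m1,m2,m3,m4,m5,m6,m7])
        (by simp [mul_eq_zero, n1,n2,n3,n4,n5,n6,n7,n8,n9,n10,n11,m1,m2,m3,m4,m5,m6,m7])]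
    rw [div_sub_div _ _
        (by simp [mul_eq_zero, n1,n2,n3,n4,n5,n6,n7,n8,n9,n10,n11,m1,m2,m3,m4,m5,m6,m7])
        (by simp [mul_eq_zero, n1,n2,n3,n4,n5,n6,n7,n8,n9,n10,n11,m1,m2,m3,m4,m5,m6,m7])]
    rw [div_eq_div_iff
        (by simp [mul_eq_zero, n1,n2,n3,n4,n5,n6,n7,n8,n9,n10,n11,m1,m2,m3,m4,m5,m6,m7])
        (by simp [mul_eq_zero, n1,n2,n3,n4,n5,n6,n7,n8,n9,n10,n11,m1,m2,m3,m4,m5,m6,m7])]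
    ring


lemma baseCaseI (i k : ℕ) (h : k ≤ i) :
    qbinom i i * qbinom (i+i) i * qbinom i k * qbinom (i+k) k
      = ∑ j ∈ Finset.range (i+k+1), TT i i k j := by
  rw [Finset.sum_eq_single_of_mem i (Finset.mem_range.mpr (by omega))]
  · simp only [TT, qbinom, qmulti]
    rw [show (((i:ℕ) : ℤ) - ((i:ℕ) : ℤ)) * (((k:ℕ) : ℤ) + ((i:ℕ) : ℤ) - ((i:ℕ) : ℤ))
          = ((0:ℕ) : ℤ) by push_cast; ring, zpow_natCast]
    split_ifs <;> try omega
    rw [show i+k-i = k by omega, show i+k-k = i by omega, show i-i = 0 by omega, qfac_zero]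
    have n1 := qfac_ne_zero i; have n2 := qfac_ne_zero k
    have n3 := qfac_ne_zero (i-k); have n4 := qfac_ne_zero (i+i)
    have n5 := qfac_ne_zero (i+k); have n6 := qfac_ne_zero (i+i-i)
    simp only [div_mul_eq_mul_div, mul_div_assoc', div_mul_div_comm, div_div]
    rw [div_eq_div_iff (by simp [mul_eq_zero, n1,n2,n3,n4,n5,n6])
        (by simp [mul_eq_zero, n1,n2,n3,n4,n5,n6])]
    ring
  · intro j hjr hne
    rcases lt_or_gt_of_ne hne with hlt | hgt
    · have hz : qmulti j i k = 0 := by rw [qmulti, if_neg (by omega)]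
      simp [TT, hz]
    · have hz : qbinom i j = 0 := by rw [qbinom, if_neg (by omega)]
      simp [TT, hz]

lemma baseCaseK (i k : ℕ) (h : i ≤ k) :
    qbinom k i * qbinom (k+i) i * qbinom k k * qbinom (k+k) k
      = ∑ j ∈ Finset.range (i+k+1), TT k i k j := by
  rw [Finset.sum_eq_single_of_mem k (Finset.mem_range.mpr (by omega))]
  · simp only [TT, qbinom, qmulti]
    rw [show (((k:ℕ) : ℤ) - ((k:ℕ) : ℤ)) * (((k:ℕ) : ℤ) + ((i:ℕ) : ℤ) - ((k:ℕ) : ℤ))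
          = ((0:ℕ) : ℤ) by push_cast; ring, zpow_natCast]
    split_ifs <;> try omega
    rw [show i+k-i = k by omega, show i+k-k = i by omega, show k-k = 0 by omega,
        show k+i-i = k by omega, qfac_zero]
    have n1 := qfac_ne_zero i; have n2 := qfac_ne_zero k
    have n3 := qfac_ne_zero (k-i); have n4 := qfac_ne_zero (k+k)
    have n5 := qfac_ne_zero (i+k); have n6 := qfac_ne_zero (k+k-k)
    simp only [div_mul_eq_mul_div, mul_div_assoc', div_mul_div_comm, div_div]
    rw [div_eq_div_iff (by simp [mul_eq_zero, n1,n2,n3,n4,n5,n6])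
        (by simp [mul_eq_zero, n1,n2,n3,n4,n5,n6])]
    ring
  · intro j hjr hne
    rcases lt_or_gt_of_ne hne with hlt | hgt
    · have hz : qmulti j i k = 0 := by rw [qmulti, if_neg (by omega)]
      simp [TT, hz]
    · have hz : qbinom k j = 0 := by rw [qbinom, if_neg (by omega)]
      simp [TT, hz]

lemma lowCase (n i k : ℕ) (hn : n < max i k) :
    qbinom n i * qbinom (n+i) i * qbinom n k * qbinom (n+k) k
      = ∑ j ∈ Finset.range (i+k+1), TT n i k j := by
  have hR : ∑ j ∈ Finset.range (i+k+1), TT n i k j = 0 := by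
    apply Finset.sum_eq_zero
    intro j hj
    by_cases hij : i ≤ j ∧ k ≤ j
    · have hz : qbinom n j = 0 := by rw [qbinom, if_neg (by omega)]
      simp [TT, hz]
    · have hz : qmulti j i k = 0 := by rw [qmulti, if_neg (by omega)]
      simp [TT, hz]
  rw [hR]
  rcases lt_or_ge n i with h | h
  · have hz : qbinom n i = 0 := by rw [qbinom, if_neg (by omega)]
    simp [hz]
  · have hz : qbinom n k = 0 := by rw [qbinom, if_neg (by omega)]
    simp [hz]

/-- Result 3.1.1 ($q$-analog of Schmidt's identity). -/
theorem stmt_10 (n i k : ℕ) :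
    qbinom n i * qbinom (n + i) i * qbinom n k * qbinom (n + k) k =
      ∑ j ∈ Finset.range (i + k + 1),
        (RatFunc.X : RatFunc ℚ) ^ (((n : ℤ) - j) * ((k : ℤ) + i - j)) *
          (qbinom (i + k) i * qmulti j i k) * qbinom n j * qbinom (n + j) j := by
  show _ = ∑ j ∈ Finset.range (i + k + 1), TT n i k j
  rcases lt_or_ge n (max i k) with hn | hn
  · exact lowCase n i k hn
  · induction n, hn using Nat.le_induction with
    | base =>
      rcases le_total k i with h | h
      · rw [max_eq_left h]; exact baseCaseI i k h
      · rw [max_eq_right h]; exact baseCaseK i k h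
    | succ n hn ih =>
      have hi : i ≤ n := le_trans (le_max_left i k) hn
      have hk : k ≤ n := le_trans (le_max_right i k) hn
      have hα : (1 - Xq^(n+1-i)) * (1 - Xq^(n+1-k)) ≠ 0 :=
        mul_ne_zero (one_sub_X_pow_ne_zero _ (by omega)) (one_sub_X_pow_ne_zero _ (by omega))
      apply mul_left_cancel₀ hα
      have hsum : (1 - Xq^(n+1-i)) * (1 - Xq^(n+1-k)) * ∑ j ∈ Finset.range (i+k+1), TT (n+1) i k j
            - (1 - Xq^(n+1+i)) * (1 - Xq^(n+1+k)) * ∑ j ∈ Finset.range (i+k+1), TT n i k j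
          = gg n i k 0 - gg n i k (i+k+1) := by
        rw [Finset.mul_sum, Finset.mul_sum, ← Finset.sum_sub_distrib,
            ← Finset.sum_range_sub' (gg n i k) (i+k+1)]
        exact Finset.sum_congr rfl fun j hj =>
          star n i k j hi hk (by have := Finset.mem_range.mp hj; omega)
      have hg0 : gg n i k 0 = 0 := by simp [gg]
      have hg1 : gg n i k (i+k+1) = 0 := by
        by_cases hle : i+k+1 ≤ n+2
        · rw [gg, if_pos ⟨le_rfl, hle⟩, show i+k+1-(i+k+1) = 0 by omega]
          simp
        · rw [gg, if_neg (by omega)]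
      have hLr := Lrec n i k hi hk
      rw [ih] at hLr
      rw [hg0, hg1] at hsum
      linear_combination hLr - hsum
end

section
/- For every nonnegative integer k and every integer r ≥ 1 there exist Laurent polynomials P_{k,0}(q), …, P_{k,rk}(q) with integer coefficients (i.e., elements of ℤ[q, q^{-1}]) such that, in ℚ(q), for all nonnegative integers n: ([n,k]·[n+k,k])^r = Σ_{j=0}^{r·k} q^{(r·k-j)·n}·P_{k,j}(q)·[n,j]·[n+j,j]. -/
namespace SchmidtAux
open Finset

abbrev K := RatFunc ℚ
abbrev L := AddMonoidAlgebra ℤ ℤ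

noncomputable def X : K := RatFunc.X

lemma X_ne_zero : (X : K) ≠ 0 := RatFunc.X_ne_zero

lemma one_sub_X_pow_ne_zero (m : ℕ) : (1 : K) - X ^ (m + 1) ≠ 0 := by
  intro h
  have h2 : (algebraMap (Polynomial ℚ) K) (1 - Polynomial.X ^ (m+1)) = 0 := by
    push_cast [map_sub, map_pow, map_one, RatFunc.algebraMap_X]
    simpa [X] using h
  have h3 : (1 - Polynomial.X ^ (m+1) : Polynomial ℚ) = 0 :=
    (map_eq_zero_iff _ (RatFunc.algebraMap_injective ℚ)).mp h2
  have := congrArg (fun p => Polynomial.coeff p (m+1)) h3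
  simp [Polynomial.coeff_one, Nat.succ_ne_zero] at this

lemma qfac_ne_zero (n : ℕ) : qfac n ≠ 0 := by
  unfold qfac
  exact Finset.prod_ne_zero_iff.2 fun m _ => one_sub_X_pow_ne_zero m

lemma qfac_succ (n : ℕ) : qfac (n + 1) = qfac n * (1 - X ^ (n + 1)) := by
  unfold qfac; rw [Finset.prod_range_succ]; rfl

lemma qfac_add (a m : ℕ) :
    qfac (a + m) = qfac a * ∏ s ∈ range m, (1 - X ^ (a + s + 1)) := by
  unfold qfac; rw [Finset.prod_range_add]; rfl

/-- evaluation of integer Laurent polynomials -/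
noncomputable def ev : L →+* K :=
  AddMonoidAlgebra.liftNCRingHom (Int.castRingHom K)
    ((Units.coeHom K).comp (zpowersHom Kˣ (Units.mk0 X X_ne_zero)))
    (fun _ _ => Commute.all _ _)

lemma ev_single (e : ℤ) (z : ℤ) : ev (AddMonoidAlgebra.single e z) = (z : K) * X ^ e := by
  have h1 : ev (AddMonoidAlgebra.single e z) = (Int.castRingHom K) z *
      ((Units.coeHom K).comp ((zpowersHom Kˣ) (Units.mk0 X X_ne_zero)))
        (Multiplicative.ofAdd e) :=
    AddMonoidAlgebra.liftNC_single _ _ _ _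
  rw [h1]
  simp [zpowersHom_apply, Units.val_zpow_eq_zpow_val]

lemma ev_apply (c : L) : ev c = ∑ e ∈ c.coeff.support, (c.coeff e : K) * X ^ e := by
  classical
  conv_lhs => rw [← AddMonoidAlgebra.sum_coeff_single c]
  rw [map_finsuppSum]
  exact Finset.sum_congr rfl fun e _ => ev_single e (c.coeff e)

lemma ev_single' (e : ℤ) (z : ℤ) :
    ev (AddMonoidAlgebra.single e z) = (z : K) * X ^ e := ev_single e z

lemma qfac_zero : qfac 0 = 1 := by unfold qfac; simp

lemma qbinom_zero (n : ℕ) : qbinom n 0 = 1 := by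
  unfold qbinom
  rw [if_pos (Nat.zero_le n), qfac_zero, Nat.sub_zero]
  field_simp [qfac_ne_zero]

lemma qbinom_self (n : ℕ) : qbinom n n = 1 := by
  unfold qbinom
  rw [if_pos le_rfl, Nat.sub_self, qfac_zero]
  field_simp [qfac_ne_zero]

lemma qbinom_eq_zero {n k : ℕ} (h : n < k) : qbinom n k = 0 := by
  unfold qbinom
  rw [if_neg (by omega)]

lemma qbinom_pascal (m i : ℕ) :
    qbinom (m + 1) (i + 1) = qbinom m (i + 1) + X ^ (m - i) * qbinom m i := by
  rcases lt_trichotomy i m with h | rfl | h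
  · obtain ⟨d, rfl⟩ : ∃ d, m = i + d + 1 := ⟨m - i - 1, by omega⟩
    unfold qbinom
    rw [if_pos (by omega), if_pos (by omega), if_pos (by omega)]
    have e1 : i + d + 1 + 1 - (i + 1) = d + 1 := by omega
    have e2 : i + d + 1 - (i + 1) = d := by omega
    have e3 : i + d + 1 - i = d + 1 := by omega
    rw [e1, e2, e3]
    rw [show i + d + 1 + 1 = (i + d + 1) + 1 from rfl, qfac_succ (i + d + 1),
      qfac_succ d, qfac_succ i]
    field_simp [qfac_ne_zero, one_sub_X_pow_ne_zero]
    ring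
  · rw [qbinom_self, qbinom_self, qbinom_eq_zero (by omega), Nat.sub_self]
    simp
  · rw [qbinom_eq_zero (by omega), qbinom_eq_zero (by omega),
      qbinom_eq_zero (by omega)]
    simp

noncomputable def intqbinom : ℕ → ℕ → L
  | _, 0 => 1
  | 0, _ + 1 => 0
  | m + 1, i + 1 =>
      intqbinom m (i + 1) + AddMonoidAlgebra.single ((m : ℤ) - i) 1 * intqbinom m i

lemma ev_intqbinom (m i : ℕ) : ev (intqbinom m i) = qbinom m i := by
  induction m generalizing i with
  | zero =>
    cases i with
    | zero => simp [intqbinom, qbinom_zero]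
    | succ i => simp [intqbinom, qbinom_eq_zero (Nat.succ_pos i)]
  | succ m ih =>
    cases i with
    | zero => simp [intqbinom, qbinom_zero]
    | succ i =>
      rw [show intqbinom (m+1) (i+1) =
          intqbinom m (i + 1) + AddMonoidAlgebra.single ((m : ℤ) - i) 1 * intqbinom m i
          from rfl]
      rw [map_add, map_mul, ih, ih, ev_single', qbinom_pascal]
      rcases le_or_gt i m with h | h
      · rw [show ((m : ℤ) - i) = ((m - i : ℕ) : ℤ) by omega, zpow_natCast]
        push_cast
        ring
      · rw [qbinom_eq_zero h]
        ring

def dexp (j k l : ℕ) : ℤ := ((l : ℤ) - j) * ((l : ℤ) - k) - j * k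

noncomputable def DL (j k l : ℕ) : L :=
  AddMonoidAlgebra.single (dexp j k l) 1 * (intqbinom l j * intqbinom l k * intqbinom (j + k) l)

noncomputable def Dc (j k l : ℕ) : K :=
  X ^ dexp j k l * (qbinom l j * qbinom l k * qbinom (j + k) l)

lemma ev_DL (j k l : ℕ) : ev (DL j k l) = Dc j k l := by
  rw [DL, Dc, map_mul, map_mul, map_mul, ev_single', ev_intqbinom, ev_intqbinom,
    ev_intqbinom]
  push_cast
  ring

lemma Dc_eq_zero_right {j k l : ℕ} (h : j + k < l) : Dc j k l = 0 := by
  rw [Dc, qbinom_eq_zero h]; ring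

lemma Dc_eq_zero_left {j k l : ℕ} (h : l < j) : Dc j k l = 0 := by
  rw [Dc, qbinom_eq_zero h]; ring

lemma Dc_eq_zero_mid {j k l : ℕ} (h : l < k) : Dc j k l = 0 := by
  rw [Dc, qbinom_eq_zero h]; ring

noncomputable def g (n j : ℕ) : K := qbinom n j * qbinom (n + j) j

lemma g_eval (n j : ℕ) :
    g n j * qfac j ^ 2 * X ^ (2*j*j)
      = ∏ s ∈ Finset.range (2*j), (X ^ j - X ^ (n+s+1)) := by
  rcases le_or_gt j n with h | h
  · obtain ⟨d, rfl⟩ : ∃ d, n = j + d := ⟨n - j, by omega⟩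
    rw [g, qbinom, qbinom, if_pos (by omega), if_pos (by omega)]
    rw [show j + d + j - j = j + d by omega, show j + d - j = d by omega]
    rw [show j + d + j = d + 2*j by omega, qfac_add d (2*j)]
    rw [Finset.prod_congr rfl
      (fun s _ => show (X:K) ^ j - X ^ (j+d+s+1) = X^j * (1 - X^(d+s+1)) by ring),
      Finset.prod_mul_distrib, Finset.prod_const, Finset.card_range]
    field_simp [qfac_ne_zero]
    ring
  · have h0 : g n j = 0 := by rw [g, qbinom, if_neg (by omega)]; ring
    rw [h0, Finset.prod_eq_zero (Finset.mem_range.2 (show j - n - 1 < 2*j by omega))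
      (show (X:K)^j - X^(n+(j-n-1)+1) = 0 by
        rw [show n+(j-n-1)+1 = j by omega, sub_self])]
    ring

lemma stepN (n j : ℕ) :
    g n j * (X^j + X^(2*n+j+1) - X^(n+2*j+1) - X^n)
      = (1 - X^(j+1))^2 * X^j * g n (j+1) := by
  have hM : (qfac (j+1)^2 * X^(2*(j+1)*(j+1)) : K) ≠ 0 :=
    mul_ne_zero (pow_ne_zero _ (qfac_ne_zero _)) (pow_ne_zero _ X_ne_zero)
  apply mul_right_cancel₀ hM
  have Hj := g_eval n j
  have Hj1 := g_eval n (j+1)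
  have peel2 : ∏ s ∈ Finset.range (2*(j+1)), ((X:K) ^ (j+1) - X ^ (n+s+1))
      = (X^(j+1) - X^(n+2*j+2)) * (X^(j+1) - X^(n+1))
        * (X^(2*j) * ∏ s ∈ Finset.range (2*j), ((X:K) ^ j - X ^ (n+s+1))) := by
    rw [show 2*(j+1) = (2*j+1)+1 by ring, Finset.prod_range_succ,
      Finset.prod_range_succ']
    rw [Finset.prod_congr rfl
      (fun s _ => show (X:K) ^ (j+1) - X ^ (n+(s+1)+1) = X * (X^j - X^(n+s+1)) by
        ring),
      Finset.prod_mul_distrib, Finset.prod_const, Finset.card_range]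
    ring
  rw [qfac_succ] at Hj1 ⊢
  linear_combination ((X^j + X^(2*n+j+1) - X^(n+2*j+1) - X^n)
      * (1 - X^(j+1))^2 * X^(4*j+2)) * Hj
    - ((1 - X^(j+1))^2 * X^j) * Hj1 - ((1 - X^(j+1))^2 * X^j) * peel2

lemma stepG (n l m : ℕ) :
    g n l * (X^(m+l) + X^(2*n+m+l+1) - X^(n+2*m+l+1) - X^(n+l))
      = X^(m+l) * (1 - X^(l+1))^2 * g n (l+1)
        + (X^(n+m+2*l+1) + X^(n+m) - X^(n+2*m+l+1) - X^(n+l)) * g n l := by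
  linear_combination (X:K)^m * stepN n l

lemma qbinom_eq {n k : ℕ} (h : k ≤ n) :
    qbinom n k = qfac n / (qfac k * qfac (n - k)) := if_pos h

lemma X_zpow_sub (A B : ℕ) : (X:K) ^ ((A:ℤ) - (B:ℤ)) = X ^ A / X ^ B := by
  rw [zpow_sub₀ X_ne_zero, zpow_natCast, zpow_natCast]

lemma recur1b (j k : ℕ) :
    (1 - X^(k+1))^2 * X^(j+2*k) * Dc j (k+1) (j+k+1)
      = Dc j k (j+k) * X^(j+2*k) * (1 - X^(j+k+1))^2 := by
  have e1 : dexp j (k+1) (j+k+1) = 0 := by unfold dexp; push_cast; ring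
  have e2 : dexp j k (j+k) = 0 := by unfold dexp; push_cast; ring
  rw [Dc, Dc, e1, e2, zpow_zero]
  have b1 : qbinom (j+k+1) j = qfac (j+k+1) / (qfac j * qfac (k+1)) := by
    rw [qbinom_eq (by omega), show j+k+1-j = k+1 by omega]
  have b2 : qbinom (j+k+1) (k+1) = qfac (j+k+1) / (qfac (k+1) * qfac j) := by
    rw [qbinom_eq (by omega), show j+k+1-(k+1) = j by omega]
  have b3 : qbinom (j+(k+1)) (j+k+1) = 1 := by
    rw [show j+(k+1) = j+k+1 by omega, qbinom_self]
  have b4 : qbinom (j+k) j = qfac (j+k) / (qfac j * qfac k) := by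
    rw [qbinom_eq (by omega), show j+k-j = k by omega]
  have b5 : qbinom (j+k) k = qfac (j+k) / (qfac k * qfac j) := by
    rw [qbinom_eq (by omega), show j+k-k = j by omega]
  have b6 : qbinom (j+k) (j+k) = 1 := qbinom_self _
  rw [b1, b2, b3, b4, b5, b6, show j+k+1 = (j+k)+1 from rfl, qfac_succ (j+k),
    qfac_succ k]
  field_simp [qfac_ne_zero, one_sub_X_pow_ne_zero]

lemma one_sub_ne {m : ℕ} (h : 1 ≤ m) : (1:K) - X^m ≠ 0 := by
  obtain ⟨a, rfl⟩ : ∃ a, m = a+1 := ⟨m-1, by omega⟩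
  exact one_sub_X_pow_ne_zero a

lemma qfac_succ' (a b : ℕ) (h : b = a + 1) : qfac b = qfac a * (1 - X ^ b) := by
  subst h; exact qfac_succ a

lemma Dc_mul (j k l : ℕ) (hj : j ≤ l) (hk : k ≤ l) (hm : l ≤ j + k) :
    Dc j k l * (X^(j*k) * (qfac j * qfac (l-j)) * (qfac k * qfac (l-k))
        * (qfac l * qfac (j+k-l)))
      = X^((l-j)*(l-k)) * (qfac l * qfac l * qfac (j+k)) := by
  have e : dexp j k l = (((l-j)*(l-k) : ℕ):ℤ) - ((j*k : ℕ):ℤ) := by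
    unfold dexp
    push_cast [Nat.cast_sub hj, Nat.cast_sub hk]
    ring
  have hx : (X:K) ^ dexp j k l * X ^ (j*k) = X ^ ((l-j)*(l-k)) := by
    rw [← zpow_natCast (X:K) (j*k), ← zpow_natCast (X:K) ((l-j)*(l-k)),
      ← zpow_add₀ X_ne_zero, e]
    congr 1
    ring
  rw [Dc, qbinom_eq hj, qbinom_eq hk, qbinom_eq hm]
  field_simp [qfac_ne_zero]
  linear_combination hx

lemma denom_ne_zero (j k l : ℕ) :
    (X^(j*k) * (qfac j * qfac (l-j)) * (qfac k * qfac (l-k))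
        * (qfac l * qfac (j+k-l)) : K) ≠ 0 := by
  refine mul_ne_zero (mul_ne_zero (mul_ne_zero ?_ ?_) ?_) ?_
  · exact pow_ne_zero _ X_ne_zero
  all_goals exact mul_ne_zero (qfac_ne_zero _) (qfac_ne_zero _)

lemma Dc_div (j k l : ℕ) (hj : j ≤ l) (hk : k ≤ l) (hm : l ≤ j + k) :
    Dc j k l
      = X^((l-j)*(l-k)) * (qfac l * qfac l * qfac (j+k))
        / (X^(j*k) * (qfac j * qfac (l-j)) * (qfac k * qfac (l-k))
            * (qfac l * qfac (j+k-l))) := by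
  rw [eq_div_iff (denom_ne_zero j k l)]
  exact Dc_mul j k l hj hk hm

lemma recur0 (j k : ℕ) :
    (1 - X^(k+1))^2 * X^(j+2*k) * Dc j (k+1) 0
      = Dc j k 0 * X^(j+k) * (X^(k+1) + X^k - X^(2*k+1) - 1) := by
  rw [show Dc j (k+1) 0 = 0 from Dc_eq_zero_mid (by omega)]
  rcases Nat.eq_zero_or_pos j with rfl | hj
  · rcases Nat.eq_zero_or_pos k with rfl | hk
    · have hb : (X^(0+1) + X^0 - X^(2*0+1) - 1 : K) = 0 := by ring
      rw [hb]; ring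
    · rw [show Dc 0 k 0 = 0 from Dc_eq_zero_mid (by omega)]; ring
  · rw [show Dc j k 0 = 0 from Dc_eq_zero_left (by omega)]; ring

lemma recur1a (j k l d : ℕ) (hd : j + k = l + d + 1) :
    (1 - X^(k+1))^2 * X^(j+2*k) * Dc j (k+1) (l+1)
      = Dc j k l * X^((d+1)+(k+l)) * (1 - X^(l+1))^2
        + Dc j k (l+1) * X^d
            * (X^(k+2*l+3) + X^k - X^(2*k+l+2) - X^(l+1)) := by
  by_cases h1 : k = l + 1
  · subst h1
    rw [show Dc j (l+1+1) (l+1) = 0 from Dc_eq_zero_mid (by omega),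
      show Dc j (l+1) l = 0 from Dc_eq_zero_mid (by omega),
      show (X^((l+1)+2*l+3) + X^(l+1) - X^(2*(l+1)+l+2) - X^(l+1) : K) = 0
        from by ring]
    ring
  by_cases h2 : l + 1 < k
  · rw [show Dc j (k+1) (l+1) = 0 from Dc_eq_zero_mid (by omega),
      show Dc j k l = 0 from Dc_eq_zero_mid (by omega),
      show Dc j k (l+1) = 0 from Dc_eq_zero_mid (by omega)]
    ring
  by_cases h3 : l + 1 < j
  · rw [show Dc j (k+1) (l+1) = 0 from Dc_eq_zero_left (by omega),
      show Dc j k l = 0 from Dc_eq_zero_left (by omega),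
      show Dc j k (l+1) = 0 from Dc_eq_zero_left (by omega)]
    ring
  by_cases h4 : j = l + 1
  · -- E2 case : j = l+1, k ≤ l
    have h5 : k = d := by omega
    subst h5
    obtain ⟨v, rfl⟩ : ∃ v, l = k + v := ⟨l - k, by omega⟩
    subst h4
    rw [show Dc (k+v+1) k (k+v) = 0 from Dc_eq_zero_left (by omega)]
    have hA := Dc_mul (k+v+1) (k+1) (k+v+1) (by omega) (by omega) (by omega)
    have hC := Dc_mul (k+v+1) k (k+v+1) (by omega) (by omega) (by omega)
    simp only [show k+v+1-(k+v+1) = 0 by omega, show k+v+1-(k+1) = v by omega,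
      show (k+v+1)+(k+1) = 2*k+v+2 by omega,
      show 2*k+v+2-(k+v+1) = k+1 by omega,
      show k+v+1-k = v+1 by omega, show (k+v+1)+k = 2*k+v+1 by omega,
      show 2*k+v+1-(k+v+1) = k by omega] at hA hC
    apply mul_right_cancel₀ (show
      (X^((k+v+1)*(k+1)) * (qfac (k+v+1) * qfac 0) * (qfac (k+1) * qfac v)
          * (qfac (k+v+1) * qfac (k+1))
        * (X^((k+v+1)*k) * (qfac (k+v+1) * qfac 0) * (qfac k * qfac (v+1))
          * (qfac (k+v+1) * qfac k)) : K) ≠ 0 from by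
      apply_rules [mul_ne_zero, pow_ne_zero, qfac_ne_zero, X_ne_zero])
    simp only [qfac_zero, qfac_succ' k (k+1) rfl, qfac_succ' v (v+1) rfl,
      qfac_succ' (2*k+v+1) (2*k+v+2) (by omega)] at hA hC ⊢
    linear_combination
      ((1 - X^(k+1))^2 * X^((k+v+1)+2*k)
        * (X^((k+v+1)*k) * (qfac (k+v+1) * 1) * (qfac k * (qfac v * (1-X^(v+1))))
            * (qfac (k+v+1) * qfac k))) * hA
      - (X^k * (X^(k+2*(k+v)+3) + X^k - X^(2*k+(k+v)+2) - X^((k+v)+1))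
        * (X^((k+v+1)*(k+1)) * (qfac (k+v+1) * 1)
            * ((qfac k * (1-X^(k+1))) * qfac v)
            * (qfac (k+v+1) * (qfac k * (1-X^(k+1)))))) * hC
  · -- generic case : j ≤ l, k ≤ l
    obtain ⟨u, v, rfl, rfl, rfl⟩ :
        ∃ u v, j = u+d+1 ∧ k = v+d+1 ∧ l = u+v+d+1 :=
      ⟨j-d-1, k-d-1, by omega, by omega, by omega⟩
    have hA := Dc_mul (u+d+1) (v+d+1+1) (u+v+d+1+1) (by omega) (by omega)
      (by omega)
    have hB := Dc_mul (u+d+1) (v+d+1) (u+v+d+1) (by omega) (by omega) (by omega)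
    have hC := Dc_mul (u+d+1) (v+d+1) (u+v+d+1+1) (by omega) (by omega)
      (by omega)
    simp only [show u+v+d+1+1-(u+d+1) = v+1 by omega,
      show u+v+d+1+1-(v+d+1+1) = u by omega,
      show (u+d+1)+(v+d+1+1) = u+v+2*d+3 by omega,
      show u+v+2*d+3-(u+v+d+1+1) = d+1 by omega,
      show u+v+d+1-(u+d+1) = v by omega,
      show u+v+d+1-(v+d+1) = u by omega,
      show (u+d+1)+(v+d+1) = u+v+2*d+2 by omega,
      show u+v+2*d+2-(u+v+d+1) = d+1 by omega,
      show u+v+d+1+1-(v+d+1) = u+1 by omega,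
      show u+v+2*d+2-(u+v+d+1+1) = d by omega] at hA hB hC
    apply mul_right_cancel₀ (show
      (X^((u+d+1)*(v+d+1+1)) * (qfac (u+d+1) * qfac (v+1))
          * (qfac (v+d+1+1) * qfac u) * (qfac (u+v+d+1+1) * qfac (d+1))
        * (X^((u+d+1)*(v+d+1)) * (qfac (u+d+1) * qfac v)
          * (qfac (v+d+1) * qfac u) * (qfac (u+v+d+1) * qfac (d+1)))
        * (X^((u+d+1)*(v+d+1)) * (qfac (u+d+1) * qfac (v+1))
          * (qfac (v+d+1) * qfac (u+1)) * (qfac (u+v+d+1+1) * qfac d)) : K)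
        ≠ 0 from by
      apply_rules [mul_ne_zero, pow_ne_zero, qfac_ne_zero, X_ne_zero])
    simp only [qfac_succ' (v+d+1) (v+d+1+1) rfl,
      qfac_succ' (u+v+d+1) (u+v+d+1+1) rfl,
      qfac_succ' (u+v+2*d+2) (u+v+2*d+3) (by omega),
      qfac_succ' u (u+1) rfl, qfac_succ' v (v+1) rfl,
      qfac_succ' d (d+1) rfl] at hA hB hC ⊢
    linear_combination
      ((1 - X^((v+d+1)+1))^2 * X^((u+d+1)+2*(v+d+1))
        * (X^((u+d+1)*(v+d+1)) * (qfac (u+d+1) * qfac v)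
            * (qfac (v+d+1) * qfac u)
            * (qfac (u+v+d+1) * (qfac d * (1-X^(d+1)))))
        * (X^((u+d+1)*(v+d+1)) * (qfac (u+d+1) * (qfac v * (1-X^(v+1))))
            * (qfac (v+d+1) * (qfac u * (1-X^(u+1))))
            * ((qfac (u+v+d+1) * (1-X^(u+v+d+1+1))) * qfac d))) * hA
      - (X^((d+1)+((v+d+1)+(u+v+d+1))) * (1 - X^((u+v+d+1)+1))^2
        * (X^((u+d+1)*(v+d+1+1)) * (qfac (u+d+1) * (qfac v * (1-X^(v+1))))
            * ((qfac (v+d+1) * (1-X^(v+d+1+1))) * qfac u)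
            * ((qfac (u+v+d+1) * (1-X^(u+v+d+1+1))) * (qfac d * (1-X^(d+1)))))
        * (X^((u+d+1)*(v+d+1)) * (qfac (u+d+1) * (qfac v * (1-X^(v+1))))
            * (qfac (v+d+1) * (qfac u * (1-X^(u+1))))
            * ((qfac (u+v+d+1) * (1-X^(u+v+d+1+1))) * qfac d))) * hB
      - (X^d * (X^((v+d+1)+2*(u+v+d+1)+3) + X^(v+d+1)
            - X^(2*(v+d+1)+(u+v+d+1)+2) - X^((u+v+d+1)+1))
        * (X^((u+d+1)*(v+d+1+1)) * (qfac (u+d+1) * (qfac v * (1-X^(v+1))))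
            * ((qfac (v+d+1) * (1-X^(v+d+1+1))) * qfac u)
            * ((qfac (u+v+d+1) * (1-X^(u+v+d+1+1))) * (qfac d * (1-X^(d+1)))))
        * (X^((u+d+1)*(v+d+1)) * (qfac (u+d+1) * qfac v)
            * (qfac (v+d+1) * qfac u)
            * (qfac (u+v+d+1) * (qfac d * (1-X^(d+1)))))) * hC

set_option maxHeartbeats 2000000 in
lemma prod_rule (k : ℕ) : ∀ j n : ℕ,
    g n j * g n k
      = ∑ l ∈ Finset.range (j+k+1), X^((j+k-l)*n) * Dc j k l * g n l := by
  induction k with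
  | zero =>
    intro j n
    simp only [Nat.add_zero]
    rw [Finset.sum_range_succ]
    rw [Finset.sum_eq_zero (fun l hl => by
      rw [show Dc j 0 l = 0 from Dc_eq_zero_left (Finset.mem_range.1 hl)]
      ring)]
    rw [show Dc j 0 j = 1 from by
      rw [Dc, show dexp j 0 j = 0 from by unfold dexp; push_cast; ring,
        zpow_zero, Nat.add_zero, qbinom_self, qbinom_zero]
      ring]
    rw [show g n 0 = 1 from by rw [g, Nat.add_zero, qbinom_zero]; ring,
      Nat.sub_self]
    ring
  | succ k ih =>
    intro j n
    have hc : ((1 - X^(k+1))^2 * X^(j+2*k) : K) ≠ 0 :=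
      mul_ne_zero (pow_ne_zero _ (one_sub_X_pow_ne_zero k))
        (pow_ne_zero _ X_ne_zero)
    apply mul_left_cancel₀ hc
    have e1 : (1-X^(k+1))^2 * X^(j+2*k) * (g n j * g n (k+1))
        = X^(j+k) * (g n j * g n k
            * (X^k + X^(2*n+k+1) - X^(n+2*k+1) - X^n)) := by
      linear_combination (-(X^(j+k) * g n j)) * (stepN n k)
    have key : ∀ l ∈ Finset.range (j+k+1),
        X^(j+k) * (X^((j+k-l)*n) * Dc j k l * g n l
          * (X^k + X^(2*n+k+1) - X^(n+2*k+1) - X^n))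
        = (X^((j+k-l)*n) * Dc j k l * X^(j+k-l) * (X^(k+l)*(1-X^(l+1))^2)
            * g n (l+1))
          + (X^((j+k-l)*n) * Dc j k l * X^(j+k-l)
            * (X^(n+k+2*l+1) + X^(n+k) - X^(n+2*k+l+1) - X^(n+l)) * g n l) := by
      intro l hl
      have hl' : l < j+k+1 := Finset.mem_range.1 hl
      obtain ⟨e, he⟩ : ∃ e, j+k = l+e := ⟨j+k-l, by omega⟩
      simp only [show j+k-l = e from by omega]
      rw [he]
      linear_combination (X^(e*n) * Dc j k l * X^e) * stepG n l k
    have left : (1-X^(k+1))^2 * X^(j+2*k) * (g n j * g n (k+1))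
        = ∑ l ∈ Finset.range (j+k+1),
            ((X^((j+k-l)*n) * Dc j k l * X^(j+k-l) * (X^(k+l)*(1-X^(l+1))^2)
              * g n (l+1))
            + (X^((j+k-l)*n) * Dc j k l * X^(j+k-l)
              * (X^(n+k+2*l+1) + X^(n+k) - X^(n+2*k+l+1) - X^(n+l))
              * g n l)) := by
      rw [e1, ih j n, Finset.sum_mul, Finset.mul_sum]
      exact Finset.sum_congr rfl key
    -- extend the second sum by one extra (vanishing) term
    have hvext : ∑ l ∈ Finset.range (j+k+1),
          X^((j+k-l)*n) * Dc j k l * X^(j+k-l)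
            * (X^(n+k+2*l+1) + X^(n+k) - X^(n+2*k+l+1) - X^(n+l)) * g n l
        = ∑ l ∈ Finset.range ((j+k+1)+1),
          X^((j+k-l)*n) * Dc j k l * X^(j+k-l)
            * (X^(n+k+2*l+1) + X^(n+k) - X^(n+2*k+l+1) - X^(n+l)) * g n l := by
      conv_rhs => rw [Finset.sum_range_succ]
      rw [show Dc j k (j+k+1) = 0 from Dc_eq_zero_right (by omega)]
      ring
    have h0 : (1-X^(k+1))^2 * X^(j+2*k)
          * (X^((j+(k+1)-0)*n) * Dc j (k+1) 0 * g n 0)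
        = X^((j+k-0)*n) * Dc j k 0 * X^(j+k-0)
            * (X^(n+k+2*0+1) + X^(n+k) - X^(n+2*k+0+1) - X^(n+0)) * g n 0 := by
      simp only [Nat.sub_zero, Nat.add_zero]
      linear_combination (X^((j+k+1)*n) * g n 0) * recur0 j k
    have hterm : ∀ l ∈ Finset.range (j+k+1),
        (1-X^(k+1))^2 * X^(j+2*k)
            * (X^((j+(k+1)-(l+1))*n) * Dc j (k+1) (l+1) * g n (l+1))
          = (X^((j+k-l)*n) * Dc j k l * X^(j+k-l) * (X^(k+l)*(1-X^(l+1))^2)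
              * g n (l+1))
            + (X^((j+k-(l+1))*n) * Dc j k (l+1) * X^(j+k-(l+1))
              * (X^(n+k+2*(l+1)+1) + X^(n+k) - X^(n+2*k+(l+1)+1) - X^(n+(l+1)))
              * g n (l+1)) := by
      intro l hl
      have hl' : l < j+k+1 := Finset.mem_range.1 hl
      by_cases hl2 : l = j+k
      · subst hl2
        simp only [show j+(k+1)-((j+k)+1) = 0 from by omega,
          show j+k-(j+k) = 0 from by omega,
          show j+k-((j+k)+1) = 0 from by omega,
          show Dc j k ((j+k)+1) = 0 from Dc_eq_zero_right (by omega)]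
        linear_combination (g n ((j+k)+1)) * recur1b j k
      · obtain ⟨e, he⟩ : ∃ e, j+k = l+e+1 := ⟨j+k-l-1, by omega⟩
        simp only [show j+(k+1)-(l+1) = e+1 from by omega,
          show j+k-l = e+1 from by omega,
          show j+k-(l+1) = e from by omega]
        linear_combination (X^((e+1)*n) * g n (l+1)) * recur1a j k l e he
    calc (1-X^(k+1))^2 * X^(j+2*k) * (g n j * g n (k+1))
        = ∑ l ∈ Finset.range (j+k+1),
            ((X^((j+k-l)*n) * Dc j k l * X^(j+k-l) * (X^(k+l)*(1-X^(l+1))^2)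
              * g n (l+1))
            + (X^((j+k-l)*n) * Dc j k l * X^(j+k-l)
              * (X^(n+k+2*l+1) + X^(n+k) - X^(n+2*k+l+1) - X^(n+l)) * g n l)) := left
      _ = (∑ l ∈ Finset.range (j+k+1), (X^((j+k-l)*n) * Dc j k l * X^(j+k-l) * (X^(k+l)*(1-X^(l+1))^2)
              * g n (l+1)))
            + ∑ l ∈ Finset.range (j+k+1), (X^((j+k-l)*n) * Dc j k l * X^(j+k-l)
              * (X^(n+k+2*l+1) + X^(n+k) - X^(n+2*k+l+1) - X^(n+l)) * g n l) := Finset.sum_add_distrib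
      _ = (∑ l ∈ Finset.range (j+k+1), (X^((j+k-l)*n) * Dc j k l * X^(j+k-l) * (X^(k+l)*(1-X^(l+1))^2)
              * g n (l+1)))
            + ∑ l ∈ Finset.range (j+k+1+1), (X^((j+k-l)*n) * Dc j k l * X^(j+k-l)
              * (X^(n+k+2*l+1) + X^(n+k) - X^(n+2*k+l+1) - X^(n+l)) * g n l) := by rw [hvext]
      _ = (∑ l ∈ Finset.range (j+k+1), (X^((j+k-l)*n) * Dc j k l * X^(j+k-l) * (X^(k+l)*(1-X^(l+1))^2)
              * g n (l+1)))
            + ((∑ l ∈ Finset.range (j+k+1), (X^((j+k-(l+1))*n) * Dc j k (l+1) * X^(j+k-(l+1))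
              * (X^(n+k+2*(l+1)+1) + X^(n+k) - X^(n+2*k+(l+1)+1) - X^(n+(l+1)))
              * g n (l+1)))
              + (X^((j+k-0)*n) * Dc j k 0 * X^(j+k-0)
              * (X^(n+k+2*0+1) + X^(n+k) - X^(n+2*k+0+1) - X^(n+0)) * g n 0)) := by
          rw [Finset.sum_range_succ' (fun l => X^((j+k-l)*n) * Dc j k l * X^(j+k-l) * (X^(n+k+2*l+1) + X^(n+k) - X^(n+2*k+l+1) - X^(n+l)) * g n l) (j+k+1)]
      _ = ((∑ l ∈ Finset.range (j+k+1), (X^((j+k-l)*n) * Dc j k l * X^(j+k-l) * (X^(k+l)*(1-X^(l+1))^2)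
              * g n (l+1)))
            + (∑ l ∈ Finset.range (j+k+1), (X^((j+k-(l+1))*n) * Dc j k (l+1) * X^(j+k-(l+1))
              * (X^(n+k+2*(l+1)+1) + X^(n+k) - X^(n+2*k+(l+1)+1) - X^(n+(l+1)))
              * g n (l+1))))
            + (X^((j+k-0)*n) * Dc j k 0 * X^(j+k-0)
              * (X^(n+k+2*0+1) + X^(n+k) - X^(n+2*k+0+1) - X^(n+0)) * g n 0) := (add_assoc _ _ _).symm
      _ = (∑ l ∈ Finset.range (j+k+1),
            ((X^((j+k-l)*n) * Dc j k l * X^(j+k-l) * (X^(k+l)*(1-X^(l+1))^2)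
              * g n (l+1))
            + (X^((j+k-(l+1))*n) * Dc j k (l+1) * X^(j+k-(l+1))
              * (X^(n+k+2*(l+1)+1) + X^(n+k) - X^(n+2*k+(l+1)+1) - X^(n+(l+1)))
              * g n (l+1))))
            + (X^((j+k-0)*n) * Dc j k 0 * X^(j+k-0)
              * (X^(n+k+2*0+1) + X^(n+k) - X^(n+2*k+0+1) - X^(n+0)) * g n 0) := by rw [← Finset.sum_add_distrib]
      _ = (∑ l ∈ Finset.range (j+k+1), (1-X^(k+1))^2 * X^(j+2*k) * (X^((j+(k+1)-(l+1))*n) * Dc j (k+1) (l+1) * g n (l+1)))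
            + (X^((j+k-0)*n) * Dc j k 0 * X^(j+k-0)
              * (X^(n+k+2*0+1) + X^(n+k) - X^(n+2*k+0+1) - X^(n+0)) * g n 0) := by
          rw [← Finset.sum_congr rfl hterm]
      _ = (∑ l ∈ Finset.range (j+k+1), (1-X^(k+1))^2 * X^(j+2*k) * (X^((j+(k+1)-(l+1))*n) * Dc j (k+1) (l+1) * g n (l+1)))
            + (1-X^(k+1))^2 * X^(j+2*k) * (X^((j+(k+1)-0)*n) * Dc j (k+1) 0 * g n 0) := by rw [← h0]
      _ = ∑ l ∈ Finset.range (j+k+1+1), (1-X^(k+1))^2 * X^(j+2*k) * (X^((j+(k+1)-l)*n) * Dc j (k+1) l * g n l) :=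
          (Finset.sum_range_succ' (fun l => (1-X^(k+1))^2 * X^(j+2*k) * (X^((j+(k+1)-l)*n) * Dc j (k+1) l * g n l)) (j+k+1)).symm
      _ = (1-X^(k+1))^2 * X^(j+2*k) * ∑ l ∈ Finset.range (j+k+1+1), X^((j+(k+1)-l)*n) * Dc j (k+1) l * g n l :=
          (Finset.mul_sum _ _ _).symm
      _ = (1-X^(k+1))^2 * X^(j+2*k) * ∑ l ∈ Finset.range (j+(k+1)+1), X^((j+(k+1)-l)*n) * Dc j (k+1) l * g n l := by
          rw [show j+k+1+1 = j+(k+1)+1 from by omega]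
lemma main (k : ℕ) : ∀ r : ℕ, 1 ≤ r → ∃ c : ℕ → L, ∀ n : ℕ,
    (g n k)^r = ∑ j ∈ Finset.range (r*k+1),
      X^((r*k-j)*n) * ev (c j) * g n j := by
  refine Nat.le_induction ?_ ?_
  · refine ⟨fun j => if j = k then 1 else 0, fun n => ?_⟩
    rw [pow_one, Finset.sum_eq_single k]
    · show g n k = X ^ ((1*k-k)*n) * ev (if k = k then 1 else 0) * g n k
      rw [if_pos rfl, map_one, show 1*k-k = 0 by omega]
      simp
    · intro b _ hbk
      show X ^ ((1*k-b)*n) * ev (if b = k then 1 else 0) * g n b = 0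
      rw [if_neg hbk, map_zero]
      ring
    · intro hk
      exact absurd (Finset.mem_range.2 (by omega)) hk
  · rintro r hr ⟨c, hc⟩
    refine ⟨fun l => ∑ j ∈ Finset.range (r*k+1), c j * DL j k l, fun n => ?_⟩
    have hrk : (r+1)*k = r*k + k := by ring
    have h1 : (g n k)^(r+1)
        = (∑ j ∈ Finset.range (r*k+1), X^((r*k-j)*n) * ev (c j) * g n j)
            * g n k := by
      rw [pow_succ, hc n]
    rw [h1, Finset.sum_mul]
    have hj : ∀ j ∈ Finset.range (r*k+1),
        X^((r*k-j)*n) * ev (c j) * g n j * g n k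
          = ∑ l ∈ Finset.range ((r+1)*k+1),
              X^(((r+1)*k-l)*n) * (ev (c j) * Dc j k l) * g n l := by
      intro j hj0
      have hj1 : j ≤ r*k := by
        have := Finset.mem_range.1 hj0; omega
      rw [show X^((r*k-j)*n) * ev (c j) * g n j * g n k
          = X^((r*k-j)*n) * ev (c j) * (g n j * g n k) from by ring,
        prod_rule k j n, Finset.mul_sum]
      rw [Finset.sum_subset (Finset.range_subset_range.2
        (show j+k+1 ≤ (r+1)*k+1 by omega))
        (fun l _ hl => by
          simp only [Finset.mem_range, not_lt] at hl
          rw [show Dc j k l = 0 from Dc_eq_zero_right (by omega)]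
          ring)]
      refine Finset.sum_congr rfl fun l hl => ?_
      rcases le_or_gt l (j+k) with h | h
      · obtain ⟨e, he⟩ : ∃ e, j+k = l+e := ⟨j+k-l, by omega⟩
        rw [show j+k-l = e from by omega,
          show (r+1)*k-l = (r*k-j) + e from by omega]
        ring
      · rw [show Dc j k l = 0 from Dc_eq_zero_right h]
        ring
    rw [Finset.sum_congr rfl hj, Finset.sum_comm]
    refine Finset.sum_congr rfl fun l _ => ?_
    rw [show ev (∑ j ∈ Finset.range (r*k+1), c j * DL j k l)
        = ∑ j ∈ Finset.range (r*k+1), ev (c j) * Dc j k l from by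
      rw [map_sum]
      exact Finset.sum_congr rfl fun j _ => by rw [map_mul, ev_DL]]
    rw [Finset.mul_sum, Finset.sum_mul]

end SchmidtAux


/-- $q$-analog of Schmidt's problem (Zudilin's question): the coefficients are
Laurent polynomials in `q` with integer coefficients, encoded as finite
`ℤ`-linear combinations of integer powers of `q` via finitely supported
coefficient functions `coef j : ℤ →₀ ℤ`. -/
theorem stmt_16 (k r : ℕ) (hr : 1 ≤ r) :
    ∃ coef : ℕ → (ℤ →₀ ℤ), ∀ n : ℕ,
      (qbinom n k * qbinom (n + k) k) ^ r =
        ∑ j ∈ Finset.range (r * k + 1),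
          (RatFunc.X : RatFunc ℚ) ^ ((r * k - j) * n) *
            (∑ e ∈ (coef j).support,
              (coef j e : RatFunc ℚ) * (RatFunc.X : RatFunc ℚ) ^ e) *
            qbinom n j * qbinom (n + j) j := by
  obtain ⟨c, hc⟩ := SchmidtAux.main k r hr
  refine ⟨fun j => (c j).coeff, fun n => ?_⟩
  refine Eq.trans (show (qbinom n k * qbinom (n + k) k) ^ r = _ from hc n) ?_
  refine Finset.sum_congr rfl fun j _ => ?_
  rw [SchmidtAux.ev_apply]
  simp only [SchmidtAux.X, SchmidtAux.g]
  ring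
end
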